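/- arXiv:1211.5884 — 8 statements merged into one kernel-verified Lean document; each statement's English description precedes it below -/
import Mathlib

section
/- Let A and B be Hermitian positive semidefinite matrices over ℂ of the same size, written in the same 2×2 block form with square leading diagonal blocks A₁₁ and B₁₁ of equal size that are Hermitian positive definite. Then det(A+B) · det(B₁₁) ≥ det(B) · det(A₁₁+B₁₁); equivalently, when det(B) > 0, det(A+B)/det(B) ≥ det(A₁₁+B₁₁)/det(B₁₁). -/
open Matrix
open scoped ComplexOrder

lemma herm_det_real {k : Type*} [Fintype k] [DecidableEq k] {M : Matrix k k ℂ}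
    (hH : M.IsHermitian) : M.det = (M.det.re : ℂ) := by
  have h : M.det = ((∏ i, hH.eigenvalues i : ℝ) : ℂ) := by
    rw [hH.det_eq_prod_eigenvalues]; push_cast; rfl
  rw [h, Complex.ofReal_re]

lemma psd_det_re_nonneg {k : Type*} [Fintype k] [DecidableEq k] {M : Matrix k k ℂ}
    (hM : M.PosSemidef) : 0 ≤ M.det.re := by
  have h : M.det = ((∏ i, hM.1.eigenvalues i : ℝ) : ℂ) := by
    rw [hM.1.det_eq_prod_eigenvalues]; push_cast; rfl
  rw [h, Complex.ofReal_re]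
  exact Finset.prod_nonneg fun i _ => hM.eigenvalues_nonneg i



lemma det_re_mono {k : Type*} [Fintype k] [DecidableEq k] {S T : Matrix k k ℂ}
    (hT : T.PosSemidef) (hST : (S - T).PosSemidef) : T.det.re ≤ S.det.re := by
  have hS : S.PosSemidef := by simpa using hST.add hT
  by_cases hdet : T.det = 0
  · rw [hdet]; simpa using psd_det_re_nonneg hS
  · open MatrixOrder in set R := CFC.sqrt T with hRdef
    have hR : R.PosSemidef := by open MatrixOrder in exact (CFC.sqrt_nonneg T).posSemidef
    have hRR : R * R = T := by open MatrixOrder in exact CFC.sqrt_mul_sqrt_self T hT.nonneg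
    clear_value R
    have hRdet : IsUnit R.det := by
      rw [isUnit_iff_ne_zero]
      intro h0
      exact hdet (by rw [← hRR, det_mul, h0, zero_mul])
    have hRinv : R⁻¹.IsHermitian := hR.1.inv
    set M := R⁻¹ * S * R⁻¹ with hMdef
    clear_value M
    have hcancel : R⁻¹ * T * R⁻¹ = 1 := by
      rw [← hRR, ← Matrix.mul_assoc, Matrix.nonsing_inv_mul _ hRdet, Matrix.one_mul,
        Matrix.mul_nonsing_inv _ hRdet]
    have hM1 : (M - 1).PosSemidef := by
      have h := hST.conjTranspose_mul_mul_same R⁻¹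
      rw [hRinv.eq] at h
      have e : R⁻¹ * (S - T) * R⁻¹ = M - 1 := by
        rw [Matrix.mul_sub, Matrix.sub_mul, hcancel, hMdef]
      rwa [e] at h
    have hM : M.PosSemidef := by
      rw [hMdef]
      have h := hS.conjTranspose_mul_mul_same R⁻¹
      rwa [hRinv.eq] at h
    have heig : ∀ i, 1 ≤ hM.1.eigenvalues i := by
      intro i
      set v := hM.1.eigenvectorBasis i with hv
      have h1 : dotProduct (star ⇑v) ⇑v = (inner ℂ v v : ℂ) := by
        rw [EuclideanSpace.inner_eq_star_dotProduct, dotProduct_comm]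
      have hv1 : dotProduct (star ⇑v) ⇑v = 1 := by
        rw [h1, inner_self_eq_norm_sq_to_K, hv, hM.1.eigenvectorBasis.orthonormal.1 i]
        norm_num
      have h2 : 0 ≤ RCLike.re (star ⇑v ⬝ᵥ ((M - 1) *ᵥ ⇑v)) :=
        (Complex.nonneg_iff.mp (hM1.dotProduct_mulVec_nonneg ⇑v)).1
      rw [Matrix.sub_mulVec, Matrix.one_mulVec, dotProduct_sub, map_sub, hv1] at h2
      simp only [RCLike.one_re] at h2
      have h2' : (1:ℝ) ≤ RCLike.re (dotProduct (star ⇑v) (M *ᵥ ⇑v)) :=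
        sub_nonneg.mp h2
      rw [hM.1.eigenvalues_eq i]
      exact h2'
    have hSRMR : R * M * R = S := by
      rw [hMdef]
      calc R * (R⁻¹ * S * R⁻¹) * R = (R * R⁻¹) * S * (R⁻¹ * R) := by
            simp only [Matrix.mul_assoc]
        _ = S := by
            rw [Matrix.mul_nonsing_inv _ hRdet, Matrix.nonsing_inv_mul _ hRdet,
              Matrix.one_mul, Matrix.mul_one]
    have hdetS : S.det = T.det * M.det := by
      rw [← hSRMR, det_mul, det_mul, ← hRR, det_mul]; ring
    have hMre : M.det = ((∏ i, hM.1.eigenvalues i : ℝ) : ℂ) := by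
      rw [hM.1.det_eq_prod_eigenvalues]; push_cast; rfl
    have hTre : T.det = (T.det.re : ℂ) := herm_det_real hT.1
    have hprod : (1:ℝ) ≤ ∏ i, hM.1.eigenvalues i := by
      have h := Finset.prod_le_prod (s := Finset.univ) (f := fun _ : k => (1:ℝ))
        (g := fun i => hM.1.eigenvalues i) (fun i _ => zero_le_one)
        (fun i _ => heig i)
      simpa using h
    have hSre : S.det.re = T.det.re * ∏ i, hM.1.eigenvalues i := by
      rw [hdetS, hMre, hTre, ← Complex.ofReal_mul, Complex.ofReal_re]; simp
    rw [hSre]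
    exact le_mul_of_one_le_right (psd_det_re_nonneg hT) hprod

/-- Lemma 1 (second inequality): for Hermitian PSD block matrices `A`, `B` with
positive definite leading blocks, `det(A+B)·det(B₁₁) ≥ det(B)·det(A₁₁+B₁₁)`. -/
theorem stmt_1 {m n : Type*} [Fintype m] [Fintype n] [DecidableEq m] [DecidableEq n]
    (A₁₁ B₁₁ : Matrix m m ℂ) (A₁₂ B₁₂ : Matrix m n ℂ)
    (A₂₁ B₂₁ : Matrix n m ℂ) (A₂₂ B₂₂ : Matrix n n ℂ)
    (hA : (Matrix.fromBlocks A₁₁ A₁₂ A₂₁ A₂₂).PosSemidef)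
    (hB : (Matrix.fromBlocks B₁₁ B₁₂ B₂₁ B₂₂).PosSemidef)
    (hA11 : A₁₁.PosDef) (hB11 : B₁₁.PosDef) :
    ((Matrix.fromBlocks A₁₁ A₁₂ A₂₁ A₂₂ + Matrix.fromBlocks B₁₁ B₁₂ B₂₁ B₂₂).det).re
        * (B₁₁.det).re
      ≥ ((Matrix.fromBlocks B₁₁ B₁₂ B₂₁ B₂₂).det).re * ((A₁₁ + B₁₁).det).re := by
  have hA21 : A₂₁ = A₁₂ᴴ := (isHermitian_fromBlocks_iff.mp hA.1).2.1.symm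
  have hB21 : B₂₁ = B₁₂ᴴ := (isHermitian_fromBlocks_iff.mp hB.1).2.1.symm
  subst hA21 hB21
  have hP : (A₁₁ + B₁₁).PosDef := hA11.add hB11
  haveI : Invertible (A₁₁ + B₁₁) := (A₁₁ + B₁₁).invertibleOfIsUnitDet hP.det_pos.ne'.isUnit
  haveI : Invertible B₁₁ := B₁₁.invertibleOfIsUnitDet hB11.det_pos.ne'.isUnit
  have hsum : Matrix.fromBlocks A₁₁ A₁₂ A₁₂ᴴ A₂₂ + Matrix.fromBlocks B₁₁ B₁₂ B₁₂ᴴ B₂₂ =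
      Matrix.fromBlocks (A₁₁ + B₁₁) (A₁₂ + B₁₂) (A₁₂ + B₁₂)ᴴ (A₂₂ + B₂₂) := by
    rw [Matrix.fromBlocks_add, conjTranspose_add]
  have hAB : (Matrix.fromBlocks (A₁₁ + B₁₁) (A₁₂ + B₁₂) (A₁₂ + B₁₂)ᴴ (A₂₂ + B₂₂)).PosSemidef :=
    hsum ▸ hA.add hB
  set S := (A₂₂ + B₂₂) - (A₁₂ + B₁₂)ᴴ * (A₁₁ + B₁₁)⁻¹ * (A₁₂ + B₁₂) with hSdef
  set T := B₂₂ - B₁₂ᴴ * B₁₁⁻¹ * B₁₂ with hTdef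
  have hSpsd : S.PosSemidef := (PosDef.fromBlocks₁₁ _ _ hP).mp hAB
  have hTpsd : T.PosSemidef := (PosDef.fromBlocks₁₁ _ _ hB11).mp hB
  have hdiff : (S - T).PosSemidef := by
    refine PosSemidef.of_dotProduct_mulVec_nonneg (hSpsd.1.sub hTpsd.1) fun y => ?_
    set x := -(((A₁₁ + B₁₁)⁻¹ * (A₁₂ + B₁₂)) *ᵥ y) with hx
    have e1 := schur_complement_eq₁₁ (A := A₁₁ + B₁₁) (A₁₂ + B₁₂) (A₂₂ + B₂₂) x y hP.1
    have e2 := schur_complement_eq₁₁ (A := B₁₁) B₁₂ B₂₂ x y hB11.1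
    have hx0 : x + ((A₁₁ + B₁₁)⁻¹ * (A₁₂ + B₁₂)) *ᵥ y = 0 := by
      rw [hx]; exact neg_add_cancel _
    rw [hx0, star_zero, Matrix.zero_vecMul, zero_dotProduct, zero_add] at e1
    rw [← hsum, Matrix.vecMul_add, add_dotProduct] at e1
    have hqA : 0 ≤ star (x ⊕ᵥ y) ᵥ* Matrix.fromBlocks A₁₁ A₁₂ A₁₂ᴴ A₂₂ ⬝ᵥ (x ⊕ᵥ y) := by
      have h := hA.dotProduct_mulVec_nonneg (x ⊕ᵥ y)
      rwa [Matrix.dotProduct_mulVec] at h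
    have hqB11 : 0 ≤ star (x + (B₁₁⁻¹ * B₁₂) *ᵥ y) ᵥ* B₁₁ ⬝ᵥ (x + (B₁₁⁻¹ * B₁₂) *ᵥ y) := by
      have h := hB11.posSemidef.dotProduct_mulVec_nonneg (x + (B₁₁⁻¹ * B₁₂) *ᵥ y)
      rwa [Matrix.dotProduct_mulVec] at h
    rw [Matrix.dotProduct_mulVec, Matrix.vecMul_sub, sub_dotProduct]
    rw [sub_nonneg]
    calc star y ᵥ* T ⬝ᵥ y
        ≤ star (x + (B₁₁⁻¹ * B₁₂) *ᵥ y) ᵥ* B₁₁ ⬝ᵥ (x + (B₁₁⁻¹ * B₁₂) *ᵥ y)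
            + star y ᵥ* T ⬝ᵥ y := le_add_of_nonneg_left hqB11
      _ = star (x ⊕ᵥ y) ᵥ* Matrix.fromBlocks B₁₁ B₁₂ B₁₂ᴴ B₂₂ ⬝ᵥ (x ⊕ᵥ y) := e2.symm
      _ ≤ star (x ⊕ᵥ y) ᵥ* Matrix.fromBlocks A₁₁ A₁₂ A₁₂ᴴ A₂₂ ⬝ᵥ (x ⊕ᵥ y)
            + star (x ⊕ᵥ y) ᵥ* Matrix.fromBlocks B₁₁ B₁₂ B₁₂ᴴ B₂₂ ⬝ᵥ (x ⊕ᵥ y) :=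
          le_add_of_nonneg_left hqA
      _ = star y ᵥ* S ⬝ᵥ y := e1
  have hst : T.det.re ≤ S.det.re := det_re_mono hTpsd hdiff
  have ht0 : 0 ≤ T.det.re := psd_det_re_nonneg hTpsd
  have hp : 0 < (A₁₁ + B₁₁).det.re := (Complex.lt_def.mp hP.det_pos).1
  have hb : 0 < B₁₁.det.re := (Complex.lt_def.mp hB11.det_pos).1
  have detAB : (Matrix.fromBlocks A₁₁ A₁₂ A₁₂ᴴ A₂₂ + Matrix.fromBlocks B₁₁ B₁₂ B₁₂ᴴ B₂₂).det
      = (A₁₁ + B₁₁).det * S.det := by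
    rw [hsum, det_fromBlocks₁₁, invOf_eq_nonsing_inv, hSdef]
  have detB : (Matrix.fromBlocks B₁₁ B₁₂ B₁₂ᴴ B₂₂).det = B₁₁.det * T.det := by
    rw [det_fromBlocks₁₁, invOf_eq_nonsing_inv, hTdef]
  have reAB : (Matrix.fromBlocks A₁₁ A₁₂ A₁₂ᴴ A₂₂ + Matrix.fromBlocks B₁₁ B₁₂ B₁₂ᴴ B₂₂).det.re
      = (A₁₁ + B₁₁).det.re * S.det.re := by
    rw [detAB, herm_det_real hP.1, herm_det_real hSpsd.1, ← Complex.ofReal_mul,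
      Complex.ofReal_re]
    simp
  have reB : (Matrix.fromBlocks B₁₁ B₁₂ B₁₂ᴴ B₂₂).det.re = B₁₁.det.re * T.det.re := by
    rw [detB, herm_det_real hB11.1, herm_det_real hTpsd.1, ← Complex.ofReal_mul,
      Complex.ofReal_re]
    simp
  rw [ge_iff_le, reAB, reB]
  nlinarith [mul_le_mul_of_nonneg_left hst (le_of_lt hp)]
end

section
/- Let B and C be n×n Hermitian matrices over ℂ with C ⪰ B (i.e., C − B positive semidefinite) and B positive definite. Then det(C)/det(B) ≥ tr(C)/tr(B); equivalently det(C)·tr(B) ≥ det(B)·tr(C). -/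
open Matrix
open scoped ComplexOrder

lemma psd_trace_nonneg {m : Type*} [Fintype m] [DecidableEq m] {M : Matrix m m ℂ}
    (h : M.PosSemidef) : 0 ≤ M.trace := by
  have hdiag : ∀ i, 0 ≤ M i i := by
    intro i
    have := h.dotProduct_mulVec_nonneg (Pi.single i 1)
    simpa [dotProduct, Pi.single_apply, apply_ite] using this
  exact Finset.sum_nonneg fun i _ => hdiag i

/-- Lemma 2: if `C ⪰ B ⪰ 0` with `B` positive definite Hermitian, then
`det(C)·tr(B) ≥ det(B)·tr(C)`, i.e. `det(C)/det(B) ≥ tr(C)/tr(B)`. -/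
theorem stmt_2 {n : ℕ} (B C : Matrix (Fin n) (Fin n) ℂ)
    (hB : B.PosDef) (hC : C.IsHermitian) (hCB : (C - B).PosSemidef) :
    (C.det).re * (B.trace).re ≥ (B.det).re * (C.trace).re := by
  classical
  have hBps := hB.posSemidef
  open scoped MatrixOrder in set S := CFC.sqrt B with hSdef
  have hS : S.PosSemidef := open scoped MatrixOrder in (CFC.sqrt_nonneg B).posSemidef
  have hSS : S * S = B := open scoped MatrixOrder in CFC.sqrt_mul_sqrt_self B hBps.nonneg
  have hdetB : (0 : ℂ) < B.det := hB.det_pos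
  have hdetSu : IsUnit S.det := by
    have h1 : S.det * S.det = B.det := by rw [← det_mul, hSS]
    have : S.det ≠ 0 := by
      intro h; rw [h, zero_mul] at h1; exact hdetB.ne' h1.symm
    exact isUnit_iff_ne_zero.mpr this
  have hSinvmul : S⁻¹ * S = 1 := nonsing_inv_mul S hdetSu
  have hmulSinv : S * S⁻¹ = 1 := mul_nonsing_inv S hdetSu
  have hSinvH : S⁻¹ᴴ = S⁻¹ := hS.1.inv
  set M := S⁻¹ * C * S⁻¹ with hMdef
  have hM : M.IsHermitian := by
    show Mᴴ = M
    rw [hMdef, conjTranspose_mul, conjTranspose_mul, hSinvH, hC.eq, Matrix.mul_assoc]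
  have hMone : (M - 1).PosSemidef := by
    have key : M - 1 = S⁻¹ * (C - B) * S⁻¹ᴴ := by
      rw [hSinvH, hMdef, Matrix.mul_sub, Matrix.sub_mul]
      congr 1
      rw [← hSS, ← Matrix.mul_assoc, Matrix.mul_assoc (S⁻¹ * S), hmulSinv,
        Matrix.mul_one, hSinvmul]
    rw [key]
    exact hCB.mul_mul_conjTranspose_same _
  set μ := hM.eigenvalues with hμdef
  have hμ1 : ∀ i, 1 ≤ μ i := by
    intro i
    have hv := hM.eigenvalues_eq i
    set v : Fin n → ℂ := ⇑(hM.eigenvectorBasis i) with hvdef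
    have hnorm : (star v ⬝ᵥ v) = 1 := by
      have := hM.eigenvectorBasis.orthonormal.1 i
      rw [dotProduct_comm, ← EuclideanSpace.inner_eq_star_dotProduct]
      simpa [inner_self_eq_norm_sq_to_K, this] using
        (inner_self_eq_norm_sq_to_K (𝕜 := ℂ) (hM.eigenvectorBasis i)).symm ▸ rfl
    have hsplit : star v ⬝ᵥ (M *ᵥ v) = star v ⬝ᵥ ((M - 1) *ᵥ v) + star v ⬝ᵥ v := by
      rw [Matrix.sub_mulVec, dotProduct_sub, Matrix.one_mulVec]
      ring
    have hge := hMone.re_dotProduct_nonneg v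
    show (1:ℝ) ≤ hM.eigenvalues i
    rw [hv, hsplit]
    simp only [map_add]
    have : RCLike.re (star v ⬝ᵥ v) = 1 := by rw [hnorm]; simp
    rw [this]
    linarith [hge]
  set d := ∏ i, μ i with hddef
  have hd1 : (1:ℝ) ≤ d := by
    rw [hddef]
    have := Finset.prod_le_prod (s := Finset.univ) (f := fun _ => (1:ℝ)) (g := μ)
      (by simp) (fun i _ => hμ1 i)
    simpa using this
  have hdge : ∀ j, μ j ≤ d := by
    intro j
    rw [hddef, ← Finset.mul_prod_erase Finset.univ μ (Finset.mem_univ j)]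
    have h1 : (1:ℝ) ≤ ∏ i ∈ Finset.univ.erase j, μ i := by
      have := Finset.prod_le_prod (s := Finset.univ.erase j) (f := fun _ => (1:ℝ)) (g := μ)
        (by simp) (fun i _ => hμ1 i)
      simpa using this
    nlinarith [hμ1 j]
  -- N = d•1 - M is PSD
  have hUU : (hM.eigenvectorUnitary : Matrix (Fin n) (Fin n) ℂ) *
      star (hM.eigenvectorUnitary : Matrix (Fin n) (Fin n) ℂ) = 1 := by
    simp
  have hN : ((d:ℂ) • 1 - M).PosSemidef := by
    have spec := hM.spectral_theorem
    have key : (d:ℂ) • 1 - M =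
        (hM.eigenvectorUnitary : Matrix (Fin n) (Fin n) ℂ) *
          diagonal (fun i => ((d - μ i : ℝ) : ℂ)) *
          (star (hM.eigenvectorUnitary : Matrix (Fin n) (Fin n) ℂ)) := by
      have hdiag : diagonal (fun i => ((d - μ i : ℝ) : ℂ)) =
          (d:ℂ) • 1 - diagonal (RCLike.ofReal ∘ μ) := by
        ext i j
        by_cases h : i = j <;>
          simp [h, diagonal_apply, Matrix.one_apply, Complex.ofReal_sub]
      rw [hdiag, Matrix.mul_sub, Matrix.sub_mul,
        ← Unitary.conjStarAlgAut_apply (S := ℂ) (x := diagonal (RCLike.ofReal ∘ μ)), ← spec]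
      congr 1
      rw [Matrix.mul_smul, Matrix.smul_mul, Matrix.mul_one, hUU]
    rw [key]
    refine (Matrix.PosSemidef.diagonal ?_).mul_mul_conjTranspose_same _
    intro i
    have : (0:ℝ) ≤ d - μ i := by linarith [hdge i]
    simpa using this
  have hSN : (S * ((d:ℂ) • 1 - M) * S).PosSemidef := by
    have := hN.mul_mul_conjTranspose_same S
    rwa [hS.1.eq] at this
  have htr0 : 0 ≤ (B * ((d:ℂ) • 1 - M)).trace := by
    have h1 : (S * ((d:ℂ) • 1 - M) * S).trace = (B * ((d:ℂ) • 1 - M)).trace := by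
      rw [trace_mul_cycle, hSS]
    rw [← h1]
    exact psd_trace_nonneg hSN
  have hBM : B * M = S * C * S⁻¹ := by
    rw [hMdef, ← hSS]
    simp only [Matrix.mul_assoc]
    rw [← Matrix.mul_assoc S S⁻¹ (C * S⁻¹), hmulSinv, Matrix.one_mul]
  have htrBM : (B * M).trace = C.trace := by
    rw [hBM, trace_mul_cycle, hSinvmul, Matrix.one_mul]
  have hexp : (B * ((d:ℂ) • 1 - M)).trace = (d:ℂ) * B.trace - C.trace := by
    rw [Matrix.mul_sub, trace_sub, Matrix.mul_smul, Matrix.mul_one, trace_smul, htrBM,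
      smul_eq_mul]
  have hdetC : C.det = B.det * (d:ℂ) := by
    have hCeq : S * M * S = C := by
      rw [hMdef]
      simp only [Matrix.mul_assoc]
      rw [hSinvmul, Matrix.mul_one, ← Matrix.mul_assoc, hmulSinv, Matrix.one_mul]
    rw [← hCeq, det_mul, det_mul]
    have : M.det = (d:ℂ) := by
      rw [hM.det_eq_prod_eigenvalues, hddef]
      push_cast
      rfl
    rw [this, ← hSS, det_mul]
    ring
  -- extract real parts
  have htrBim : (B.trace).im = 0 := by
    have := Matrix.trace_conjTranspose B
    rw [hB.isHermitian.eq] at this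
    have := Complex.conj_eq_iff_im.mp this.symm
    exact this
  have htrCim : (C.trace).im = 0 := by
    have := Matrix.trace_conjTranspose C
    rw [hC.eq] at this
    exact Complex.conj_eq_iff_im.mp this.symm
  have hbre : 0 < (B.det).re ∧ (B.det).im = 0 := by
    rw [Complex.lt_def] at hdetB
    exact ⟨by simpa using hdetB.1, hdetB.2.symm⟩
  have hre0 : 0 ≤ ((B * ((d:ℂ) • 1 - M)).trace).re := by
    rw [Complex.le_def] at htr0
    simpa using htr0.1
  rw [hexp] at hre0
  have hkey : (C.trace).re ≤ d * (B.trace).re := by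
    have : ((d:ℂ) * B.trace - C.trace).re = d * (B.trace).re - (C.trace).re := by
      simp [Complex.sub_re, Complex.mul_re, htrBim]
    linarith [hre0, this ▸ hre0]
  have hdetCre : (C.det).re = (B.det).re * d := by
    rw [hdetC]
    simp [Complex.mul_re, hbre.2]
  rw [hdetCre]
  have := mul_le_mul_of_nonneg_left hkey hbre.1.le
  nlinarith [hbre.1]
end

section
/- Let B be an N×N Hermitian positive definite matrix over ℂ, A an N×N Hermitian positive semidefinite matrix, and set C = A + B. Let V ∈ ℂ^{N×d} have orthonormal columns, i.e., VᴴV = I_d. Then det(B⁻¹C) ≥ det((VᴴBV)⁻¹(VᴴCV)); equivalently det(C)·det(VᴴBV) ≥ det(B)·det(VᴴCV). (Here VᴴBV is positive definite, hence invertible.) -/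
open Matrix
open scoped ComplexOrder

/-- If `P ⪰ 0` then `det (1 + P) ≥ 1`. -/
private lemma aux_det_one_add {n : ℕ} {P : Matrix (Fin n) (Fin n) ℂ}
    (hP : P.PosSemidef) : (1 : ℂ) ≤ (1 + P).det := by
  have hH := hP.1
  have hU : (hH.eigenvectorUnitary : Matrix (Fin n) (Fin n) ℂ) *
      star (hH.eigenvectorUnitary : Matrix (Fin n) (Fin n) ℂ) = 1 :=
    (Matrix.mem_unitaryGroup_iff).mp hH.eigenvectorUnitary.2
  have key : (1 : Matrix (Fin n) (Fin n) ℂ) + P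
      = (hH.eigenvectorUnitary : Matrix (Fin n) (Fin n) ℂ) *
          (1 + diagonal (RCLike.ofReal ∘ hH.eigenvalues)) *
          star (hH.eigenvectorUnitary : Matrix (Fin n) (Fin n) ℂ) := by
    conv_lhs => rw [hH.spectral_theorem]
    rw [mul_add, mul_one, add_mul, hU, Unitary.conjStarAlgAut_apply]
  rw [key, det_mul_right_comm, hU, one_mul]
  rw [← Matrix.diagonal_one, diagonal_add, det_diagonal]
  simp only [Pi.add_apply, Function.comp_apply]
  have hle : (1 : ℝ) ≤ ∏ i, (1 + hH.eigenvalues i) := by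
    calc (1 : ℝ) = ∏ _i : Fin n, 1 := by simp
      _ ≤ ∏ i, (1 + hH.eigenvalues i) :=
        Finset.prod_le_prod (fun i _ => zero_le_one)
          (fun i _ => le_add_of_nonneg_right (hP.eigenvalues_nonneg i))
  have hcast : ∏ i, ((1:ℂ) + RCLike.ofReal (hH.eigenvalues i))
      = ((∏ i, (1 + hH.eigenvalues i) : ℝ) : ℂ) := by
    push_cast
    rfl
  rw [hcast]
  calc (1 : ℂ) = ((1 : ℝ) : ℂ) := by norm_num
    _ ≤ _ := by rw [Complex.real_le_real]; exact hle

/-- Determinant monotonicity: `X ≻ 0`, `Y - X ⪰ 0` implies `det X ≤ det Y`. -/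
private lemma aux_det_le {n : ℕ} {X Y : Matrix (Fin n) (Fin n) ℂ}
    (hX : X.PosDef) (hXY : (Y - X).PosSemidef) : X.det ≤ Y.det := by
  obtain ⟨R, hRR, hRH⟩ : ∃ R : Matrix (Fin n) (Fin n) ℂ, R * R = X ∧ Rᴴ = R := by
    open scoped MatrixOrder in
    exact ⟨CFC.sqrt X, CFC.sqrt_mul_sqrt_self X hX.posSemidef.nonneg,
      (CFC.sqrt_nonneg X).posSemidef.1⟩
  have hdetX : 0 < X.det := hX.det_pos
  have hdet2 : R.det * R.det = X.det := by rw [← det_mul, hRR]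
  have hRdet : IsUnit R.det := by
    refine isUnit_iff_ne_zero.mpr fun h => ?_
    rw [h, mul_zero] at hdet2
    exact hdetX.ne' hdet2.symm
  have hRiH : (R⁻¹)ᴴ = R⁻¹ := by rw [conjTranspose_nonsing_inv, hRH]
  have hinvmul : R⁻¹ * R = 1 := nonsing_inv_mul R hRdet
  have hmulinv : R * R⁻¹ = 1 := mul_nonsing_inv R hRdet
  have hXid : R⁻¹ * X * R⁻¹ = 1 := by
    rw [← hRR, ← mul_assoc, mul_assoc R⁻¹ R R, ← mul_assoc R⁻¹ R, hinvmul, one_mul, hmulinv]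
  have hM : (R⁻¹ * Y * R⁻¹ - 1).PosSemidef := by
    have h1 : R⁻¹ * (Y - X) * (R⁻¹)ᴴ = R⁻¹ * Y * R⁻¹ - 1 := by
      rw [hRiH, Matrix.mul_sub, Matrix.sub_mul, hXid]
    rw [← h1]
    exact hXY.mul_mul_conjTranspose_same R⁻¹
  have hdetM : (1 : ℂ) ≤ (R⁻¹ * Y * R⁻¹).det := by
    have := aux_det_one_add hM
    rwa [add_sub_cancel] at this
  have hYdet : Y.det = X.det * (R⁻¹ * Y * R⁻¹).det := by
    have hRinvdet : R⁻¹.det = (R.det)⁻¹ := by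
      rw [det_nonsing_inv, Ring.inverse_eq_inv]
    rw [det_mul, det_mul, hRinvdet]
    field_simp [hRdet.ne_zero]
    rw [← hdet2]; ring
  calc X.det = X.det * 1 := by ring
    _ ≤ X.det * (R⁻¹ * Y * R⁻¹).det :=
        mul_le_mul_of_nonneg_left hdetM hdetX.le
    _ = Y.det := hYdet.symm

/-- Compression of a positive definite matrix by a matrix with orthonormal
columns is positive definite. -/
private lemma aux_pd {N d : ℕ} {B : Matrix (Fin N) (Fin N) ℂ} (hB : B.PosDef)
    (V : Matrix (Fin N) (Fin d) ℂ) (hV : Vᴴ * V = 1) : (Vᴴ * B * V).PosDef := by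
  refine PosDef.of_dotProduct_mulVec_pos ?_ ?_
  · exact isHermitian_conjTranspose_mul_mul V hB.1
  · intro x hx
    have hVx : V *ᵥ x ≠ 0 := by
      intro h
      apply hx
      calc x = (Vᴴ * V) *ᵥ x := by rw [hV, one_mulVec]
        _ = Vᴴ *ᵥ (V *ᵥ x) := by rw [← mulVec_mulVec]
        _ = 0 := by rw [h, mulVec_zero]
    simpa only [star_mulVec, dotProduct_mulVec, vecMul_vecMul] using hB.dotProduct_mulVec_pos hVx

/-- `V (VᴴBV)⁻¹ Vᴴ ⪯ B⁻¹`. -/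
private lemma aux_proj {N d : ℕ} {B : Matrix (Fin N) (Fin N) ℂ} (hB : B.PosDef)
    (V : Matrix (Fin N) (Fin d) ℂ) (hV : Vᴴ * V = 1) :
    (B⁻¹ - V * (Vᴴ * B * V)⁻¹ * Vᴴ).PosSemidef := by
  obtain ⟨S, hSS, hSH⟩ : ∃ S : Matrix (Fin N) (Fin N) ℂ, S * S = B ∧ Sᴴ = S := by
    open scoped MatrixOrder in
    exact ⟨CFC.sqrt B, CFC.sqrt_mul_sqrt_self B hB.posSemidef.nonneg,
      (CFC.sqrt_nonneg B).posSemidef.1⟩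
  have hdet2 : S.det * S.det = B.det := by rw [← det_mul, hSS]
  have hSdet : IsUnit S.det := by
    refine isUnit_iff_ne_zero.mpr fun h => ?_
    rw [h, mul_zero] at hdet2
    exact hB.det_pos.ne' hdet2.symm
  have hSiH : (S⁻¹)ᴴ = S⁻¹ := by rw [conjTranspose_nonsing_inv, hSH]
  have hinvmul : S⁻¹ * S = 1 := nonsing_inv_mul S hSdet
  have hmulinv : S * S⁻¹ = 1 := mul_nonsing_inv S hSdet
  set G := Vᴴ * B * V with hGdef
  have hG : G.PosDef := aux_pd hB V hV
  have hGH : Gᴴ = G := hG.1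
  have hGdet : IsUnit G.det := isUnit_iff_ne_zero.mpr hG.det_pos.ne'
  have hGiG : G⁻¹ * G = 1 := nonsing_inv_mul G hGdet
  have hGiH : (G⁻¹)ᴴ = G⁻¹ := by rw [conjTranspose_nonsing_inv, hGH]
  set W := S * V with hWdef
  have hWW : Wᴴ * W = G := by
    rw [hWdef, conjTranspose_mul, hSH, hGdef, ← hSS]
    simp only [Matrix.mul_assoc]
  set P := W * G⁻¹ * Wᴴ with hPdef
  have hPH : Pᴴ = P := by
    rw [hPdef]
    simp only [conjTranspose_mul, conjTranspose_conjTranspose, hGiH]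
    simp only [Matrix.mul_assoc]
  have hPP : P * P = P := by
    have h : P * P = W * (G⁻¹ * ((Wᴴ * W) * (G⁻¹ * Wᴴ))) := by
      rw [hPdef]
      simp only [Matrix.mul_assoc]
    rw [h, hWW, ← Matrix.mul_assoc G⁻¹ G _, hGiG, Matrix.one_mul, hPdef, Matrix.mul_assoc W G⁻¹ Wᴴ]
  have h1P : (1 - P).PosSemidef := by
    have hid : (1 - P)ᴴ * (1 - P) = 1 - P := by
      rw [conjTranspose_sub, conjTranspose_one, hPH, Matrix.sub_mul, one_mul,
        Matrix.mul_sub, mul_one, hPP]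
      simp
    rw [← hid]
    exact posSemidef_conjTranspose_mul_self (1 - P)
  have hBinv : B⁻¹ = S⁻¹ * S⁻¹ := by rw [← hSS, Matrix.mul_inv_rev]
  have hSiW : S⁻¹ * W = V := by rw [hWdef, ← Matrix.mul_assoc, hinvmul, Matrix.one_mul]
  have hWSi : Wᴴ * S⁻¹ = Vᴴ := by
    rw [hWdef, conjTranspose_mul, hSH, Matrix.mul_assoc, hmulinv, Matrix.mul_one]
  have key : S⁻¹ * (1 - P) * (S⁻¹)ᴴ = B⁻¹ - V * G⁻¹ * Vᴴ := by
    rw [hSiH, Matrix.mul_sub, Matrix.sub_mul, mul_one, hBinv, hPdef]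
    congr 1
    calc S⁻¹ * (W * G⁻¹ * Wᴴ) * S⁻¹
        = (S⁻¹ * W) * (G⁻¹ * (Wᴴ * S⁻¹)) := by simp only [Matrix.mul_assoc]
      _ = V * (G⁻¹ * Vᴴ) := by rw [hSiW, hWSi]
      _ = V * G⁻¹ * Vᴴ := by rw [Matrix.mul_assoc]
  rw [← key]
  exact h1P.mul_mul_conjTranspose_same S⁻¹

/-- Step 1 of the proof of Theorem 1: with `B ≻ 0`, `A ⪰ 0`, `C = A + B` and
`V` having orthonormal columns, `det(B⁻¹C) ≥ det((VᴴBV)⁻¹(VᴴCV))`, stated as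
`det(C)·det(VᴴBV) ≥ det(B)·det(VᴴCV)`. -/
theorem stmt_3 {N d : ℕ} (A B : Matrix (Fin N) (Fin N) ℂ)
    (hA : A.PosSemidef) (hB : B.PosDef)
    (V : Matrix (Fin N) (Fin d) ℂ) (hV : Vᴴ * V = 1) :
    ((A + B).det).re * ((Vᴴ * B * V).det).re
      ≥ (B.det).re * ((Vᴴ * (A + B) * V).det).re := by
  obtain ⟨K, hKK, hKH⟩ : ∃ K : Matrix (Fin N) (Fin N) ℂ, K * K = A ∧ Kᴴ = K := by
    open scoped MatrixOrder in
    exact ⟨CFC.sqrt A, CFC.sqrt_mul_sqrt_self A hA.nonneg,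
      (CFC.sqrt_nonneg A).posSemidef.1⟩
  set G := Vᴴ * B * V with hGdef
  have hG : G.PosDef := aux_pd hB V hV
  have hGdet : IsUnit G.det := isUnit_iff_ne_zero.mpr hG.det_pos.ne'
  have hBdet : IsUnit B.det := isUnit_iff_ne_zero.mpr hB.det_pos.ne'
  set T := V * G⁻¹ * Vᴴ with hTdef
  have hT : T.PosSemidef := hG.inv.posSemidef.mul_mul_conjTranspose_same V
  -- identity 1 : det (A + B) = det B * det (1 + K * B⁻¹ * K)
  have hid1 : (A + B).det = B.det * (1 + K * B⁻¹ * K).det := by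
    have h1 : A + B = B * (1 + B⁻¹ * K * K) := by
      rw [Matrix.mul_add, mul_one, ← mul_assoc, ← mul_assoc,
        mul_nonsing_inv B hBdet, one_mul, hKK, add_comm]
    rw [h1, det_mul]
    congr 1
    have h2 := det_one_add_mul_comm (B⁻¹ * K) K
    rw [h2, ← mul_assoc]
  -- identity 2 : det (Vᴴ (A+B) V) = det G * det (1 + K * T * K)
  have hid2 : (Vᴴ * (A + B) * V).det = G.det * (1 + K * T * K).det := by
    have hA' : Vᴴ * (A + B) * V = (Vᴴ * K) * (K * V) + G := by
      rw [Matrix.mul_add, Matrix.add_mul, hGdef]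
      congr 1
      rw [← hKK]
      simp only [Matrix.mul_assoc]
    have h1 : Vᴴ * (A + B) * V = G * (1 + G⁻¹ * ((Vᴴ * K) * (K * V))) := by
      rw [hA', Matrix.mul_add, mul_one, ← Matrix.mul_assoc G G⁻¹ _,
        mul_nonsing_inv G hGdet, one_mul, add_comm]
    have hX : ((K * V) * G⁻¹) * (Vᴴ * K) = K * T * K := by
      rw [hTdef]
      simp only [Matrix.mul_assoc]
    rw [h1, det_mul]
    congr 1
    calc (1 + G⁻¹ * ((Vᴴ * K) * (K * V))).det
        = (1 + ((Vᴴ * K) * (K * V)) * G⁻¹).det :=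
          det_one_add_mul_comm G⁻¹ ((Vᴴ * K) * (K * V))
      _ = (1 + (Vᴴ * K) * ((K * V) * G⁻¹)).det := by rw [Matrix.mul_assoc]
      _ = (1 + ((K * V) * G⁻¹) * (Vᴴ * K)).det :=
          det_one_add_mul_comm (Vᴴ * K) ((K * V) * G⁻¹)
      _ = (1 + K * T * K).det := by rw [hX]
  -- the compression inequality
  have hXY : ((1 + K * B⁻¹ * K) - (1 + K * T * K)).PosSemidef := by
    have h1 : (1 + K * B⁻¹ * K) - (1 + K * T * K) = K * (B⁻¹ - T) * Kᴴ := by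
      rw [hKH, Matrix.mul_sub, Matrix.sub_mul]
      abel
    rw [h1]
    exact (aux_proj hB V hV).mul_mul_conjTranspose_same K
  have hX : (1 + K * T * K).PosDef := by
    have hKTK : (K * T * K).PosSemidef := by
      have := hT.mul_mul_conjTranspose_same K
      rwa [hKH] at this
    exact Matrix.PosDef.one.add_posSemidef hKTK
  have hdetle : (1 + K * T * K).det ≤ (1 + K * B⁻¹ * K).det := aux_det_le hX hXY
  -- combine into a complex inequality
  have hC : (A + B).PosDef := Matrix.PosDef.posSemidef_add hA hB
  have hVC : (Vᴴ * (A + B) * V).PosDef := aux_pd hC V hV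
  have hmain : B.det * (Vᴴ * (A + B) * V).det ≤ (A + B).det * G.det := by
    rw [hid1, hid2]
    calc B.det * (G.det * (1 + K * T * K).det)
        = (B.det * G.det) * (1 + K * T * K).det := by ring
      _ ≤ (B.det * G.det) * (1 + K * B⁻¹ * K).det := by
          refine mul_le_mul_of_nonneg_left hdetle ?_
          exact mul_nonneg hB.det_pos.le hG.det_pos.le
      _ = B.det * (1 + K * B⁻¹ * K).det * G.det := by ring
  -- pass to real parts
  have h1 := Complex.le_def.mp hmain
  have himB : (B.det).im = 0 := (Complex.pos_iff.mp hB.det_pos).2.symm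
  have himC : ((A + B).det).im = 0 := (Complex.pos_iff.mp hC.det_pos).2.symm
  have himG : (G.det).im = 0 := (Complex.pos_iff.mp hG.det_pos).2.symm
  have himVC : ((Vᴴ * (A + B) * V).det).im = 0 :=
    (Complex.pos_iff.mp hVC.det_pos).2.symm
  have h2 := h1.1
  rw [Complex.mul_re, Complex.mul_re, himB, himC, himG, himVC] at h2
  simpa using h2
end

section
/- (Theorem 1, matrix form.) For each k ∈ {1,…,K}, let A_k be an N_k×N_k Hermitian positive semidefinite matrix over ℂ, B_k an N_k×N_k Hermitian positive definite matrix, C_k = A_k + B_k, and V_k ∈ ℂ^{N_k×d_k} with VₖᴴV_k = I_{d_k}. Then log₂( 1 + (∑_{k=1}^K tr(VₖᴴA_kV_k)) / (∑_{k=1}^K tr(VₖᴴB_kV_k)) ) ≤ ∑_{k=1}^K log₂ det(B_k⁻¹ C_k). (Note: tr(VₖᴴA_kV_k) ≥ 0 and tr(VₖᴴB_kV_k) > 0, so all expressions are well defined.) -/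
open Matrix
open scoped ComplexOrder

set_option maxHeartbeats 1000000

private lemma aux_one_add_sum_le_prod {ι : Type*} (s : Finset ι) (f : ι → ℝ)
    (hf : ∀ i ∈ s, 0 ≤ f i) : 1 + ∑ i ∈ s, f i ≤ ∏ i ∈ s, (1 + f i) := by
  classical
  induction s using Finset.induction_on with
  | empty => simp
  | insert _ _ ha ih =>
    rename_i a s
    simp only [Finset.mem_insert, forall_eq_or_imp] at hf
    rw [Finset.sum_insert ha, Finset.prod_insert ha]
    have h1 := ih hf.2
    have h2 : 0 ≤ ∑ i ∈ s, f i := Finset.sum_nonneg hf.2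
    nlinarith [hf.1]
private lemma aux_trace_re_nonneg {n : Type*} [Fintype n] [DecidableEq n] {M : Matrix n n ℂ}
    (hM : M.PosSemidef) : 0 ≤ M.trace.re := by
  rw [Matrix.trace]
  rw [Complex.re_sum]
  refine Finset.sum_nonneg fun i _ => ?_
  have h := hM.re_dotProduct_nonneg (Pi.single i 1)
  simpa [Matrix.diag, dotProduct, mulVec, Pi.single_apply, Finset.mul_sum] using h
private lemma aux_conj_diag {n m : Type*} [Fintype n] [Fintype m]
    (M : Matrix n n ℂ) (V : Matrix n m ℂ) (i : m) :
    (Vᴴ * M * V) i i = star (fun r => V r i) ⬝ᵥ M *ᵥ (fun r => V r i) := by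
  simp only [Matrix.mul_apply, dotProduct, mulVec, conjTranspose_apply, Finset.sum_mul,
    Pi.star_apply]
  rw [Finset.sum_comm]
  refine Finset.sum_congr rfl fun r _ => ?_
  rw [Finset.mul_sum]
  refine Finset.sum_congr rfl fun j _ => ?_
  ring
private lemma aux_trace_re_pos {n m : Type*} [Fintype n] [Fintype m] [DecidableEq m] [Nonempty m]
    {B : Matrix n n ℂ} {V : Matrix n m ℂ} (hB : B.PosDef) (hV : Vᴴ * V = 1) :
    0 < ((Vᴴ * B * V).trace).re := by
  have hcol : ∀ i : m, (fun r => V r i) ≠ 0 := by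
    intro i h0
    have h1 : (Vᴴ * V) i i = 1 := by rw [hV]; simp [Matrix.one_apply]
    rw [Matrix.mul_apply] at h1
    have hz : ∀ r, V r i = 0 := fun r => congrFun h0 r
    simp [conjTranspose_apply, hz] at h1
  rw [Matrix.trace, Complex.re_sum]
  refine Finset.sum_pos (fun i _ => ?_) Finset.univ_nonempty
  have h := hB.re_dotProduct_pos (hcol i)
  have heq := aux_conj_diag B V i
  rw [Matrix.diag]
  rw [heq]
  simpa using h
open scoped MatrixOrder in
private lemma aux_key {n : Type*} [Fintype n] [DecidableEq n]
    {A B : Matrix n n ℂ} (hA : A.PosSemidef) (hB : B.PosDef) :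
    ∃ c : ℝ, 0 ≤ c ∧ PosSemidef ((c : ℂ) • B - A) ∧
      1 + c ≤ ((B⁻¹ * (A + B)).det).re := by
  classical
  have hBi : (B⁻¹).PosDef := hB.inv
  set Q := CFC.sqrt B with hQdef
  have hQps : Q.PosSemidef := (CFC.sqrt_nonneg B).posSemidef
  have hQQ : Q * Q = B := CFC.sqrt_mul_sqrt_self B hB.posSemidef.nonneg
  have hdetQ : Q.det ≠ 0 := by
    intro h
    have hBdet : B.det = 0 := by rw [← hQQ, det_mul, h, zero_mul]
    exact hB.det_pos.ne' hBdet
  have hQinv : (Q⁻¹).PosSemidef := hQps.inv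
  have hQsq : Q⁻¹ ^ 2 = B⁻¹ := by rw [pow_two, ← Matrix.mul_inv_rev, hQQ]
  set R := CFC.sqrt B⁻¹ with hRdef
  have hRps : R.PosSemidef := (CFC.sqrt_nonneg B⁻¹).posSemidef
  have hRQeq : Q⁻¹ = R := hB.posSemidef.inv_sqrt
  have hQR : Q * R = 1 := by rw [← hRQeq]; exact mul_nonsing_inv Q hdetQ.isUnit
  have hRQ : R * Q = 1 := by rw [← hRQeq]; exact nonsing_inv_mul Q hdetQ.isUnit
  have hRR : R * R = B⁻¹ := CFC.sqrt_mul_sqrt_self B⁻¹ hBi.posSemidef.nonneg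
  set S := R * A * R with hSdef
  have hS : S.PosSemidef := by
    have h := hA.mul_mul_conjTranspose_same R
    rwa [hRps.1] at h
  set U : Matrix n n ℂ := (hS.1.eigenvectorUnitary : Matrix n n ℂ) with hUdef
  set μ : n → ℝ := hS.1.eigenvalues with hμdef
  have hμ : ∀ i, 0 ≤ μ i := hS.eigenvalues_nonneg
  set c := ∑ i, μ i with hc
  have hc0 : 0 ≤ c := Finset.sum_nonneg fun i _ => hμ i
  have hspec : S = U * diagonal (Complex.ofReal ∘ μ) * star U := hS.1.spectral_theorem
  have hU1 : U * star U = 1 := mem_unitaryGroup_iff.mp hS.1.eigenvectorUnitary.2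
  have hU1' : star U * U = 1 := mem_unitaryGroup_iff'.mp hS.1.eigenvectorUnitary.2
  clear_value c μ U S R Q
  refine ⟨c, hc0, ?_, ?_⟩
  · -- PosSemidef ((c:ℂ) • B - A)
    have hdiag : diagonal (fun i => ((c - μ i : ℝ) : ℂ)) =
        (c : ℂ) • (1 : Matrix n n ℂ) - diagonal (Complex.ofReal ∘ μ) := by
      rw [smul_one_eq_diagonal, diagonal_sub]
      funext i; simp [Function.comp]
    have hT : PosSemidef ((c : ℂ) • (1 : Matrix n n ℂ) - S) := by
      have hD : PosSemidef (diagonal (fun i => ((c - μ i : ℝ) : ℂ))) :=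
        PosSemidef.diagonal fun i => by
          show (0:ℂ) ≤ ((c - μ i : ℝ) : ℂ)
          rw [Complex.zero_le_real]
          have h5 : μ i ≤ c := by
            rw [hc]; exact Finset.single_le_sum (fun j _ => hμ j) (Finset.mem_univ i)
          linarith
      have h1 := hD.mul_mul_conjTranspose_same U
      rw [← star_eq_conjTranspose] at h1
      have h2 : U * diagonal (fun i => ((c - μ i : ℝ) : ℂ)) * star U =
          (c : ℂ) • (1 : Matrix n n ℂ) - S := by
        rw [hdiag, mul_sub, sub_mul, hspec]
        congr 1
        rw [Matrix.mul_smul, mul_one, Matrix.smul_mul, hU1]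
      rwa [h2] at h1
    have h3 := hT.mul_mul_conjTranspose_same Q
    rw [hQps.1] at h3
    have h4 : Q * ((c : ℂ) • (1 : Matrix n n ℂ) - S) * Q = (c : ℂ) • B - A := by
      rw [mul_sub, sub_mul, Matrix.mul_smul, mul_one, Matrix.smul_mul, hQQ]
      congr 1
      rw [hSdef]
      calc Q * (R * A * R) * Q = (Q * R) * A * (R * Q) := by
            simp only [Matrix.mul_assoc]
        _ = A := by rw [hQR, hRQ, one_mul, Matrix.mul_one]
    rwa [h4] at h3
  · -- determinant bound
    have hRBR : R * B * R = 1 := by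
      rw [← hQQ]
      calc R * (Q * Q) * R = (R * Q) * (Q * R) := by simp only [Matrix.mul_assoc]
        _ = 1 := by rw [hQR, hRQ, one_mul]
    have hdet : (B⁻¹ * (A + B)).det = ((∏ i, (1 + μ i) : ℝ) : ℂ) := by
      calc (B⁻¹ * (A + B)).det = (R * R).det * (A + B).det := by rw [det_mul, hRR]
        _ = (R * (A + B) * R).det := by rw [det_mul, det_mul, det_mul]; ring
        _ = (1 + S).det := by
            congr 1
            rw [hSdef, mul_add, add_mul, hRBR, add_comm]
        _ = (U * (1 + diagonal (Complex.ofReal ∘ μ)) * star U).det := by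
            congr 1
            rw [mul_add, add_mul, mul_one, hU1, hspec]
        _ = (1 + diagonal (Complex.ofReal ∘ μ)).det := by
            rw [det_mul, det_mul, mul_comm, ← mul_assoc, ← det_mul, hU1', det_one, one_mul]
        _ = ∏ i, (1 + (μ i : ℂ)) := by
            rw [← diagonal_one, diagonal_add, det_diagonal]
            simp
        _ = ((∏ i, (1 + μ i) : ℝ) : ℂ) := by push_cast; ring
    rw [hdet, Complex.ofReal_re]
    have := aux_one_add_sum_le_prod Finset.univ μ (fun i _ => hμ i)
    simpa [hc] using this

/-- Theorem 1 (matrix form): with `A_k ⪰ 0`, `B_k ≻ 0`, `C_k = A_k + B_k` and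
decoders `V_k` with orthonormal columns,
`log₂(1 + (∑ tr(VₖᴴA_kV_k)) / (∑ tr(VₖᴴB_kV_k))) ≤ ∑ log₂ det(B_k⁻¹ C_k)`. -/
theorem stmt_6 {K : ℕ} (hK : 0 < K) (N d : Fin K → ℕ) (hd : ∀ k, 0 < d k)
    (A B : ∀ k, Matrix (Fin (N k)) (Fin (N k)) ℂ)
    (V : ∀ k, Matrix (Fin (N k)) (Fin (d k)) ℂ)
    (hA : ∀ k, (A k).PosSemidef) (hB : ∀ k, (B k).PosDef)
    (hV : ∀ k, (V k)ᴴ * V k = 1) :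
    Real.logb 2 (1 +
        (∑ k, (((V k)ᴴ * A k * V k).trace).re) / (∑ k, (((V k)ᴴ * B k * V k).trace).re))
      ≤ ∑ k, Real.logb 2 ((((B k)⁻¹ * (A k + B k)).det).re) := by
  classical
  have : Nonempty (Fin K) := ⟨⟨0, hK⟩⟩
  choose c hc0 hpsd hdet using fun k => aux_key (hA k) (hB k)
  set a : Fin K → ℝ := fun k => (((V k)ᴴ * A k * V k).trace).re with hadef
  set b : Fin K → ℝ := fun k => (((V k)ᴴ * B k * V k).trace).re with hbdef
  set D : Fin K → ℝ := fun k => ((((B k)⁻¹ * (A k + B k)).det).re) with hDdef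
  have ha : ∀ k, 0 ≤ a k := fun k =>
    aux_trace_re_nonneg ((hA k).conjTranspose_mul_mul_same (V k))
  have hb : ∀ k, 0 < b k := fun k =>
    have : Nonempty (Fin (d k)) := ⟨⟨0, hd k⟩⟩
    aux_trace_re_pos (hB k) (hV k)
  have hab : ∀ k, a k ≤ c k * b k := by
    intro k
    have h := aux_trace_re_nonneg ((hpsd k).conjTranspose_mul_mul_same (V k))
    have heq : (V k)ᴴ * ((c k : ℂ) • B k - A k) * V k =
        (c k : ℂ) • ((V k)ᴴ * B k * V k) - (V k)ᴴ * A k * V k := by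
      rw [Matrix.mul_sub, Matrix.sub_mul, Matrix.mul_smul, Matrix.smul_mul]
    rw [heq, trace_sub, trace_smul, Complex.sub_re, smul_eq_mul, Complex.re_ofReal_mul] at h
    linarith
  have hD1 : ∀ k, 1 + c k ≤ D k := hdet
  have hDpos : ∀ k, (0:ℝ) < D k := fun k => lt_of_lt_of_le (by linarith [hc0 k]) (hD1 k)
  have hlog : ∑ k, Real.logb 2 (D k) = Real.logb 2 (∏ k, D k) :=
    (Real.logb_prod _ _ fun k _ => (hDpos k).ne').symm
  rw [show (∑ k, Real.logb 2 ((((B k)⁻¹ * (A k + B k)).det).re)) = ∑ k, Real.logb 2 (D k) from rfl,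
    hlog]
  have hsb : 0 < ∑ k, b k := Finset.sum_pos (fun k _ => hb k) Finset.univ_nonempty
  have hpos : (0:ℝ) < 1 + (∑ k, a k) / (∑ k, b k) := by
    have : 0 ≤ (∑ k, a k) / (∑ k, b k) :=
      div_nonneg (Finset.sum_nonneg fun k _ => ha k) hsb.le
    linarith
  refine Real.logb_le_logb_of_le one_lt_two hpos ?_
  have h1 : (∑ k, a k) / (∑ k, b k) ≤ ∑ k, c k := by
    rw [div_le_iff₀ hsb]
    calc ∑ k, a k ≤ ∑ k, c k * b k := Finset.sum_le_sum fun k _ => hab k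
      _ ≤ ∑ k, (∑ j, c j) * b k := Finset.sum_le_sum fun k _ =>
          mul_le_mul_of_nonneg_right
            (Finset.single_le_sum (fun j _ => hc0 j) (Finset.mem_univ k)) (hb k).le
      _ = (∑ j, c j) * (∑ k, b k) := by rw [← Finset.mul_sum]
  have h2 : 1 + ∑ k, c k ≤ ∏ k, (1 + c k) :=
    aux_one_add_sum_le_prod Finset.univ c (fun k _ => hc0 k)
  have h3 : ∏ k, (1 + c k) ≤ ∏ k, D k :=
    Finset.prod_le_prod (fun k _ => by linarith [hc0 k]) (fun k _ => hD1 k)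
  linarith
end

section
/- (Theorem 2, stationarity transfer.) Let E be a real normed vector space, let n, d, h : E → ℝ be Fréchet differentiable at a point x*, with d(x*) > 0, and let λ ∈ ℝ. Set C = n(x*)/d(x*). If C · Dd(x*) − Dn(x*) − λ · Dh(x*) = 0 (as continuous linear functionals on E), then, with λ̃ = −λ/d(x*), the quotient n/d is differentiable at x* and D(n/d)(x*) − λ̃ · Dh(x*) = 0. Consequently any stationary point of the reformulated problem min C·d − n subject to h = 0 (with C chosen as the ratio value at that point) is a stationary point of the fractional problem max n/d subject to h = 0. -/
/-- Theorem 2 (stationarity transfer): if `C·Dd(x*) − Dn(x*) − λ·Dh(x*) = 0`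
with `C = n(x*)/d(x*)` and `d(x*) > 0`, then `n/d` is differentiable at `x*`
with derivative `λ̃ · Dh(x*)` where `λ̃ = −λ/d(x*)`, i.e.
`D(n/d)(x*) − λ̃·Dh(x*) = 0`. -/
theorem stmt_9 {E : Type*} [NormedAddCommGroup E] [NormedSpace ℝ E]
    (n d h : E → ℝ) (x : E) (n' d' h' : E →L[ℝ] ℝ)
    (hn : HasFDerivAt n n' x) (hd : HasFDerivAt d d' x) (hh : HasFDerivAt h h' x)
    (hdpos : 0 < d x) (lam : ℝ)
    (hstat : (n x / d x) • d' - n' - lam • h' = 0) :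
    HasFDerivAt (fun y => n y / d y) ((-lam / d x) • h') x := by
  have hne : d x ≠ 0 := ne_of_gt hdpos
  have hn' : n' = (n x / d x) • d' - lam • h' := by
    rw [sub_sub, sub_eq_zero] at hstat
    exact eq_sub_of_add_eq hstat.symm
  have hinv : HasFDerivAt (fun y => (d y)⁻¹) ((-(d x ^ 2)⁻¹) • d') x :=
    (hasDerivAt_inv hne).comp_hasFDerivAt x hd
  have hmul := hn.mul hinv
  have heq : (fun y => n y / d y) = fun y => n y * (d y)⁻¹ := by
    funext y; rw [div_eq_mul_inv]
  rw [heq]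
  convert hmul using 1
  · rfl
  · rfl
  · rfl
  ext v
  subst hn'
  simp only [ContinuousLinearMap.smul_apply, ContinuousLinearMap.sub_apply, ContinuousLinearMap.add_apply,
    ContinuousLinearMap.coe_smul', Pi.smul_apply, smul_eq_mul]
  field_simp
  ring
end

section
/- (Theorem 3, indefinite case.) Let B̄₁ be an n×n Hermitian matrix over ℂ that is not positive semidefinite (i.e., it has a negative eigenvalue), let b̄ ∈ ℂⁿ, and let η > 0. Then every global minimizer p of g(p) = pᴴB̄₁p + b̄ᴴp + pᴴb̄ over the closed ball {p ∈ ℂⁿ : pᴴp ≤ η} satisfies pᴴp = η. Consequently the minimum of g over the ball {pᴴp ≤ η} equals the minimum of g over the sphere {pᴴp = η}. -/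
open Matrix
open scoped ComplexOrder

/-- Theorem 3 (indefinite case): if the Hermitian matrix `B̄₁` is not positive
semidefinite, every global minimizer of `g` over the ball `{p : pᴴp ≤ η}` lies
on the sphere `pᴴp = η`, and hence also minimizes `g` over the sphere. -/
theorem stmt_11 {n : ℕ} (B₁ : Matrix (Fin n) (Fin n) ℂ) (hB₁ : B₁.IsHermitian)
    (hneg : ¬ B₁.PosSemidef) (b : Fin n → ℂ) (η : ℝ) (hη : 0 < η)
    (g : (Fin n → ℂ) → ℝ)
    (hg : ∀ p, g p = ((star p ⬝ᵥ B₁.mulVec p) + (star b ⬝ᵥ p) + (star p ⬝ᵥ b)).re)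
    (p : Fin n → ℂ)
    (hfeas : (star p ⬝ᵥ p).re ≤ η)
    (hmin : ∀ q, (star q ⬝ᵥ q).re ≤ η → g p ≤ g q) :
    (star p ⬝ᵥ p).re = η ∧ ∀ q, (star q ⬝ᵥ q).re = η → g p ≤ g q := by
  have key : (star p ⬝ᵥ p).re = η := by
    by_contra hne
    have hlt : (star p ⬝ᵥ p).re < η := lt_of_le_of_ne hfeas hne
    -- get a direction of negative curvature
    rw [Matrix.posSemidef_iff_dotProduct_mulVec] at hneg
    push_neg at hneg
    obtain ⟨v, hv⟩ := hneg hB₁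
    have hself : star (star v ⬝ᵥ B₁ *ᵥ v) = star v ⬝ᵥ B₁ *ᵥ v := by
      calc star (star v ⬝ᵥ B₁ *ᵥ v) = star (B₁ *ᵥ v) ⬝ᵥ v := by
            rw [star_dotProduct, star_star]
        _ = (star v ᵥ* B₁ᴴ) ⬝ᵥ v := by rw [star_mulVec]
        _ = star v ⬝ᵥ B₁ᴴ *ᵥ v := by rw [← dotProduct_mulVec]
        _ = star v ⬝ᵥ B₁ *ᵥ v := by rw [hB₁.eq]
    have him : (star v ⬝ᵥ B₁ *ᵥ v).im = 0 := Complex.conj_eq_iff_im.mp hself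
    have hc : (star v ⬝ᵥ B₁ *ᵥ v).re < 0 := by
      by_contra h
      exact hv (by rw [Complex.le_def]; exact ⟨le_of_not_gt h, him.symm⟩)
    clear hv hneg hself
    set c : ℝ := (star v ⬝ᵥ B₁ *ᵥ v).re with hcdef
    set K : ℝ := (star p ⬝ᵥ B₁ *ᵥ v).re + (star v ⬝ᵥ B₁ *ᵥ p).re
      + (star b ⬝ᵥ v).re + (star v ⬝ᵥ b).re with hK
    -- sign choice
    obtain ⟨s, hs1, hsK⟩ : ∃ s : ℝ, s^2 = 1 ∧ s * K ≤ 0 := by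
      rcases le_or_gt K 0 with h | h
      · exact ⟨1, by norm_num, by nlinarith⟩
      · exact ⟨-1, by norm_num, by nlinarith⟩
    set w : Fin n → ℂ := (s : ℂ) • v with hw
    -- expansions
    have expandg : ∀ t : ℝ, g (p + (t : ℂ) • w)
        = g p + t * (s * K) + t ^ 2 * c := by
      intro t
      rw [hg, hg, hw]
      simp only [smul_smul, star_add, star_smul, mulVec_add, mulVec_smul,
        dotProduct_add, add_dotProduct, dotProduct_smul, smul_dotProduct,
        smul_eq_mul, star_trivial, Complex.add_re, Complex.mul_re,
        Complex.ofReal_re, Complex.ofReal_im, RCLike.star_def, _root_.map_mul,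
        Complex.conj_ofReal]
      push_cast
      simp only [Complex.add_re, Complex.mul_re, Complex.mul_im,
        Complex.ofReal_re, Complex.ofReal_im, Complex.conj_re, Complex.conj_im]
      rw [hK, hcdef]
      ring_nf
      rw [hs1]
      ring
    have expandn : ∀ t : ℝ, (star (p + (t : ℂ) • w) ⬝ᵥ (p + (t : ℂ) • w)).re
        = (star p ⬝ᵥ p).re
          + t * (s * ((star p ⬝ᵥ v).re + (star v ⬝ᵥ p).re))
          + t ^ 2 * (star v ⬝ᵥ v).re := by
      intro t
      rw [hw]
      simp only [smul_smul, star_add, star_smul, dotProduct_add,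
        add_dotProduct, dotProduct_smul, smul_dotProduct, smul_eq_mul,
        RCLike.star_def, _root_.map_mul, Complex.conj_ofReal]
      push_cast
      simp only [Complex.add_re, Complex.mul_re, Complex.mul_im,
        Complex.ofReal_re, Complex.ofReal_im, Complex.conj_re, Complex.conj_im]
      ring_nf
      rw [hs1]
      ring
    set M : ℝ := s * ((star p ⬝ᵥ v).re + (star v ⬝ᵥ p).re) with hM
    set N : ℝ := (star v ⬝ᵥ v).re with hN
    -- choose t
    set D : ℝ := |M| + |N| + 1 with hD
    have hD0 : 0 < D := by positivity
    set t : ℝ := min 1 ((η - (star p ⬝ᵥ p).re) / D) with ht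
    have ht0 : 0 < t := lt_min one_pos (div_pos (by linarith) hD0)
    have ht1 : t ≤ 1 := min_le_left _ _
    have ht2 : t ≤ (η - (star p ⬝ᵥ p).re) / D := min_le_right _ _
    have h4 : t * D ≤ η - (star p ⬝ᵥ p).re := (le_div_iff₀ hD0).mp ht2
    clear_value c K M N D t
    -- feasibility
    have hfq : (star (p + (t : ℂ) • w) ⬝ᵥ (p + (t : ℂ) • w)).re ≤ η := by
      rw [expandn t]
      have h1 : t * M ≤ t * |M| := by
        have := le_abs_self M
        nlinarith
      have h2 : t ^ 2 * N ≤ t * |N| := by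
        have h2a : t ^ 2 * N ≤ t ^ 2 * |N| :=
          mul_le_mul_of_nonneg_left (le_abs_self N) (sq_nonneg t)
        have h2b : t ^ 2 * |N| ≤ t * |N| := by
          have : t ^ 2 ≤ t := by nlinarith
          exact mul_le_mul_of_nonneg_right this (abs_nonneg N)
        linarith
      have h3 : t * (|M| + |N|) ≤ t * D := by nlinarith
      nlinarith
    -- decrease
    have hdec : g (p + (t : ℂ) • w) < g p := by
      rw [expandg t]
      have e1 : t * (s * K) ≤ 0 := mul_nonpos_of_nonneg_of_nonpos ht0.le hsK
      have e2 : t ^ 2 * c < 0 := mul_neg_of_pos_of_neg (pow_pos ht0 2) hc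
      linarith
    exact absurd (hmin _ hfq) (not_le.mpr hdec)
  refine ⟨key, fun q hq => hmin q (le_of_eq hq)⟩
end

section
/- (Theorem 4 / rank-one precoder.) Let Q be an M×M Hermitian matrix over ℂ, L an M×M Hermitian positive semidefinite matrix, p > 0 and η ≥ 0 real numbers, and d ≥ 1. Suppose the feasible set S = {X ∈ ℂ^{M×d} : tr(XᴴX) = p and tr(XᴴLX) = η} is nonempty. Then the problem min_{X ∈ S} tr(XᴴQX) has a global minimizer X* of rank one, i.e., there exists X* ∈ S with rank(X*) = 1 such that tr(X*ᴴQX*) ≤ tr(XᴴQX) for all X ∈ S. -/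
open Matrix
open scoped ComplexOrder

namespace THaux
variable {n : Type*} [Fintype n]

noncomputable def q (B : Matrix n n ℂ) (x : n → ℂ) : ℂ := star x ⬝ᵥ B *ᵥ x
noncomputable def nsq (x : n → ℂ) : ℂ := star x ⬝ᵥ x

lemma nsq_eq_sum (x : n → ℂ) : nsq x = ∑ i, ((‖x i‖ : ℂ))^2 := by
  simp [nsq, dotProduct, Complex.conj_mul']

lemma nsq_eq_re (x : n → ℂ) : nsq x = ((nsq x).re : ℂ) := by
  rw [nsq_eq_sum]; norm_cast

lemma nsq_re_eq (x : n → ℂ) : (nsq x).re = ∑ i, ‖x i‖^2 := by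
  rw [nsq_eq_sum]; norm_cast

lemma nsq_re_nonneg (x : n → ℂ) : 0 ≤ (nsq x).re := by
  rw [nsq_re_eq]; positivity

lemma nsq_eq_zero_iff (x : n → ℂ) : nsq x = 0 ↔ x = 0 := by
  rw [nsq_eq_re]
  norm_cast
  rw [nsq_re_eq]
  constructor
  · intro h
    funext i
    have : ‖x i‖^2 = 0 :=
      Finset.sum_eq_zero_iff_of_nonneg (by intro j _; positivity) |>.mp h i (Finset.mem_univ i)
    simpa using this
  · intro h; simp [h]

lemma star_dot_comm (x y : n → ℂ) : star y ⬝ᵥ x = (starRingEnd ℂ) (star x ⬝ᵥ y) := by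
  simp [dotProduct, map_sum]
  apply Finset.sum_congr rfl
  intro i _
  ring

lemma q_expand (B : Matrix n n ℂ) (a b : ℂ) (x y : n → ℂ) :
    q B (a • x + b • y) = (starRingEnd ℂ) a * a * q B x + (starRingEnd ℂ) a * b * (star x ⬝ᵥ B *ᵥ y)
      + (starRingEnd ℂ) b * a * (star y ⬝ᵥ B *ᵥ x) + (starRingEnd ℂ) b * b * q B y := by
  simp only [q, star_add, star_smul, mulVec_add, mulVec_smul, add_dotProduct, smul_dotProduct,
    dotProduct_add, dotProduct_smul, smul_eq_mul, star_trivial, RCLike.star_def]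
  ring

lemma nsq_expand (a b : ℂ) (x y : n → ℂ) :
    nsq (a • x + b • y) = (starRingEnd ℂ) a * a * nsq x + (starRingEnd ℂ) a * b * (star x ⬝ᵥ y)
      + (starRingEnd ℂ) b * a * (star y ⬝ᵥ x) + (starRingEnd ℂ) b * b * nsq y := by
  simp only [nsq, star_add, star_smul, add_dotProduct, smul_dotProduct,
    dotProduct_add, dotProduct_smul, smul_eq_mul, star_trivial, RCLike.star_def]
  ring

lemma q_smul (B : Matrix n n ℂ) (a : ℂ) (x : n → ℂ) :
    q B (a • x) = (starRingEnd ℂ) a * a * q B x := by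
  have := q_expand B a 0 x x
  simpa using this

lemma nsq_smul (a : ℂ) (x : n → ℂ) : nsq (a • x) = (starRingEnd ℂ) a * a * nsq x := by
  have := nsq_expand a 0 x x
  simpa using this

lemma conj_q (B : Matrix n n ℂ) (x : n → ℂ) :
    (starRingEnd ℂ) (q B x) = q Bᴴ x := by
  simp only [q, dotProduct, mulVec, conjTranspose_apply, map_sum, _root_.map_mul,
    Finset.mul_sum, Pi.star_apply, RCLike.star_def]
  rw [Finset.sum_comm]
  apply Finset.sum_congr rfl; intro i _
  apply Finset.sum_congr rfl; intro j _
  simp only [Complex.conj_conj]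
  ring

lemma q_herm_real {B : Matrix n n ℂ} (hB : B.IsHermitian) (x : n → ℂ) :
    q B x = ((q B x).re : ℂ) := by
  have h : (starRingEnd ℂ) (q B x) = q B x := by rw [conj_q, hB]
  exact (Complex.conj_eq_iff_re.mp h).symm

lemma q_aff [DecidableEq n] (A : Matrix n n ℂ) (c P' : ℂ) (u : n → ℂ) :
    q (c • (A - P' • (1 : Matrix n n ℂ))) u = c * (q A u - P' * nsq u) := by
  simp only [q, nsq, smul_mulVec, sub_mulVec, dotProduct_smul, dotProduct_sub,
    smul_eq_mul]
  rw [one_mulVec]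

/-- the joint numerical range -/
def NR (A : Matrix n n ℂ) : Set ℂ := {z | ∃ x : n → ℂ, nsq x = 1 ∧ q A x = z}

theorem NR_convex [DecidableEq n] (A : Matrix n n ℂ) : Convex ℝ (NR A) := by
  rintro P ⟨x, hx1, hx2⟩ R ⟨y, hy1, hy2⟩ s t hs ht hst
  by_cases hPR : P = R
  · refine ⟨x, hx1, ?_⟩
    rw [hx2, hPR, ← add_smul, hst, one_smul]
  -- normalize
  set B := ((R - P)⁻¹) • (A - P • (1 : Matrix n n ℂ)) with hBdef
  have hRP : R - P ≠ 0 := sub_ne_zero.mpr (Ne.symm hPR)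
  have hqB : ∀ u : n → ℂ, q B u = (R - P)⁻¹ * (q A u - P * nsq u) := fun u => q_aff A _ P u
  have hB0 : q B x = 0 := by rw [hqB, hx2, hx1]; ring
  have hB1 : q B y = 1 := by rw [hqB, hy2, hy1]; field_simp
  set α := star x ⬝ᵥ B *ᵥ y with hα
  set β := star y ⬝ᵥ B *ᵥ x with hβ
  set δ := α - (starRingEnd ℂ) β with hδ
  set c : ℂ := if δ = 0 then 1 else (starRingEnd ℂ) δ / (‖δ‖ : ℂ) with hc
  have hcnorm : (starRingEnd ℂ) c * c = 1 := by
    by_cases h : δ = 0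
    · simp [hc, h]
    · rw [hc, if_neg h]
      have hδn : (‖δ‖ : ℂ) ≠ 0 := by
        simpa using norm_ne_zero_iff.mpr h
      rw [map_div₀, Complex.conj_conj, Complex.conj_ofReal, div_mul_div_comm, Complex.mul_conj']
      rw [div_eq_one_iff_eq (by simpa using mul_ne_zero hδn hδn)]
      norm_cast
      ring
  have hcd : (c * δ).im = 0 := by
    by_cases h : δ = 0
    · simp [h]
    · rw [hc, if_neg h]
      have hδn : (‖δ‖ : ℂ) ≠ 0 := by simpa using norm_ne_zero_iff.mpr h
      rw [div_mul_eq_mul_div, Complex.conj_mul']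
      norm_cast
  have hγreal : (c * α + (starRingEnd ℂ) c * β).im = 0 := by
    have h2 : c * α + (starRingEnd ℂ) c * β
        = c * δ + (c * (starRingEnd ℂ) β + (starRingEnd ℂ) (c * (starRingEnd ℂ) β)) := by
      rw [_root_.map_mul, Complex.conj_conj, hδ]
      ring
    rw [h2]
    simp [Complex.add_im, Complex.conj_im, hcd]
    ring
  set w : ℂ := star x ⬝ᵥ y with hw
  have hyx : star y ⬝ᵥ x = (starRingEnd ℂ) w := star_dot_comm x y
  set e : ℝ := (c * w).re with he
  set g : ℝ := (c * α + (starRingEnd ℂ) c * β).re with hg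
  have hγ : c * α + (starRingEnd ℂ) c * β = (g : ℂ) := by
    apply Complex.ext
    · simp [hg]
    · simp [hγreal]
  set z : ℝ → (n → ℂ) := fun r => ((1 - r : ℝ) : ℂ) • x + (((r : ℝ) : ℂ) * c) • y with hzdef
  have hcw : ∀ r : ℝ, ((1 - r : ℝ) : ℂ) * ((r : ℝ) : ℂ) * (c * w)
      + ((r : ℝ) : ℂ) * ((1 - r : ℝ) : ℂ) * (starRingEnd ℂ) (c * w)
      = ((2 * r * (1 - r) * e : ℝ) : ℂ) := by
    intro r
    have : ((1 - r : ℝ) : ℂ) * ((r : ℝ) : ℂ) * (c * w)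
        + ((r : ℝ) : ℂ) * ((1 - r : ℝ) : ℂ) * (starRingEnd ℂ) (c * w)
        = ((1 - r : ℝ) : ℂ) * ((r : ℝ) : ℂ) * ((c * w) + (starRingEnd ℂ) (c * w)) := by ring
    rw [this, Complex.add_conj]
    push_cast
    ring
  have hnz : ∀ r : ℝ, nsq (z r) = (((1 - r)^2 + r^2 + 2 * r * (1 - r) * e : ℝ) : ℂ) := by
    intro r
    rw [hzdef]
    rw [nsq_expand, hx1, hy1, hyx]
    simp only [_root_.map_mul, Complex.conj_ofReal]
    have h1 : ((r : ℝ) : ℂ) * (starRingEnd ℂ) c * (((r : ℝ) : ℂ) * c) = ((r^2 : ℝ) : ℂ) := by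
      have : ((r : ℝ) : ℂ) * (starRingEnd ℂ) c * (((r : ℝ) : ℂ) * c)
          = ((r : ℝ) : ℂ) * ((r : ℝ) : ℂ) * ((starRingEnd ℂ) c * c) := by ring
      rw [this, hcnorm]; push_cast; ring
    calc ((1 - r : ℝ) : ℂ) * ((1 - r : ℝ) : ℂ) * 1 + ((1 - r : ℝ) : ℂ) * (((r : ℝ) : ℂ) * c) * w
          + ((r : ℝ) : ℂ) * (starRingEnd ℂ) c * ((1 - r : ℝ) : ℂ) * (starRingEnd ℂ) w
          + ((r : ℝ) : ℂ) * (starRingEnd ℂ) c * (((r : ℝ) : ℂ) * c) * 1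
        = ((1 - r : ℝ) : ℂ) * ((1 - r : ℝ) : ℂ)
          + (((1 - r : ℝ) : ℂ) * ((r : ℝ) : ℂ) * (c * w)
            + ((r : ℝ) : ℂ) * ((1 - r : ℝ) : ℂ) * (starRingEnd ℂ) (c * w))
          + ((r : ℝ) : ℂ) * (starRingEnd ℂ) c * (((r : ℝ) : ℂ) * c) := by
          rw [_root_.map_mul]; ring
      _ = (((1 - r)^2 + r^2 + 2 * r * (1 - r) * e : ℝ) : ℂ) := by
          rw [hcw r, h1]; push_cast; ring
  have hqz : ∀ r : ℝ, q B (z r) = (((r^2 + r * (1 - r) * g : ℝ)) : ℂ) := by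
    intro r
    rw [hzdef]
    rw [q_expand, hB0, hB1, ← hα, ← hβ]
    simp only [_root_.map_mul, Complex.conj_ofReal]
    have h1 : ((r : ℝ) : ℂ) * (starRingEnd ℂ) c * (((r : ℝ) : ℂ) * c) = ((r^2 : ℝ) : ℂ) := by
      have : ((r : ℝ) : ℂ) * (starRingEnd ℂ) c * (((r : ℝ) : ℂ) * c)
          = ((r : ℝ) : ℂ) * ((r : ℝ) : ℂ) * ((starRingEnd ℂ) c * c) := by ring
      rw [this, hcnorm]; push_cast; ring
    calc ((1 - r : ℝ) : ℂ) * ((1 - r : ℝ) : ℂ) * 0 + ((1 - r : ℝ) : ℂ) * (((r : ℝ) : ℂ) * c) * α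
          + ((r : ℝ) : ℂ) * (starRingEnd ℂ) c * ((1 - r : ℝ) : ℂ) * β
          + ((r : ℝ) : ℂ) * (starRingEnd ℂ) c * (((r : ℝ) : ℂ) * c) * 1
        = ((r : ℝ) : ℂ) * ((1 - r : ℝ) : ℂ) * (c * α + (starRingEnd ℂ) c * β)
          + ((r : ℝ) : ℂ) * (starRingEnd ℂ) c * (((r : ℝ) : ℂ) * c) := by ring
      _ = (((r^2 + r * (1 - r) * g : ℝ)) : ℂ) := by
          rw [hγ, h1]; push_cast; ring
  have hzne : ∀ r : ℝ, z r ≠ 0 := by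
    intro r hz0
    have heq : ((1 - r : ℝ) : ℂ) • x = -((((r : ℝ) : ℂ) * c) • y) := by
      rw [eq_neg_iff_add_eq_zero]
      exact hz0
    have hns : (((1 - r)^2 : ℝ) : ℂ) = ((r^2 : ℝ) : ℂ) := by
      have h1 : nsq (((1 - r : ℝ) : ℂ) • x) = (((1 - r)^2 : ℝ) : ℂ) := by
        rw [nsq_smul, hx1, Complex.conj_ofReal]; push_cast; ring
      have h2 : nsq (-((((r : ℝ) : ℂ) * c) • y)) = ((r^2 : ℝ) : ℂ) := by
        have : -((((r : ℝ) : ℂ) * c) • y) = (-(((r : ℝ) : ℂ) * c)) • y := by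
          rw [neg_smul]
        rw [this, nsq_smul, hy1, _root_.map_neg, _root_.map_mul, Complex.conj_ofReal]
        have : -(((r : ℝ) : ℂ) * (starRingEnd ℂ) c) * -(((r : ℝ) : ℂ) * c)
            = ((r : ℝ) : ℂ) * ((r : ℝ) : ℂ) * ((starRingEnd ℂ) c * c) := by ring
        rw [mul_one, this, hcnorm]; push_cast; ring
      rw [← h1, ← h2, heq]
    have hr2 : r = 1/2 := by
      have := Complex.ofReal_injective hns
      nlinarith [this]
    have hxy : x = (-c) • y := by
      funext i
      have h3 := congrFun heq i
      simp only [Pi.smul_apply, smul_eq_mul, Pi.neg_apply, hr2] at h3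
      push_cast at h3
      simp only [Pi.smul_apply, smul_eq_mul, Pi.neg_apply]
      linear_combination 2 * h3
    have : q B x = 1 := by
      rw [hxy, q_smul, hB1, _root_.map_neg]
      rw [mul_one, neg_mul_neg]
      exact hcnorm
    rw [hB0] at this
    exact zero_ne_one this
  have hmpos : ∀ r : ℝ, 0 < (1 - r)^2 + r^2 + 2 * r * (1 - r) * e := by
    intro r
    have h0 := nsq_re_nonneg (z r)
    have hne0 : (nsq (z r)) ≠ 0 := by
      intro h
      exact hzne r ((nsq_eq_zero_iff _).mp h)
    have hre : (nsq (z r)).re = (1 - r)^2 + r^2 + 2 * r * (1 - r) * e := by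
      rw [hnz r, Complex.ofReal_re]
    rcases lt_or_eq_of_le h0 with h | h
    · rw [← hre]; exact h
    · exfalso
      apply hne0
      rw [nsq_eq_re, ← h]
      simp
  set f : ℝ → ℝ := fun r => (r^2 + r * (1 - r) * g) / ((1 - r)^2 + r^2 + 2 * r * (1 - r) * e)
    with hf
  have c1 : Continuous fun r : ℝ => r^2 + r * (1 - r) * g :=
    (continuous_id.pow 2).add ((continuous_id.mul (continuous_const.sub continuous_id)).mul continuous_const)
  have c2 : Continuous fun r : ℝ => (1 - r)^2 + r^2 + 2 * r * (1 - r) * e :=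
    (((continuous_const.sub continuous_id).pow 2).add (continuous_id.pow 2)).add
      (((continuous_const.mul continuous_id).mul (continuous_const.sub continuous_id)).mul continuous_const)
  have hfc : Continuous f := c1.div c2 fun r => ne_of_gt (hmpos r)
  have hf0 : f 0 = 0 := by simp [hf]
  have hf1 : f 1 = 1 := by norm_num [hf]
  have hIVT := intermediate_value_Icc (by norm_num : (0:ℝ) ≤ 1) hfc.continuousOn
  have htmem : t ∈ Set.Icc (f 0) (f 1) := by
    rw [hf0, hf1]
    exact ⟨ht, by linarith⟩
  obtain ⟨r, hrmem, hfr⟩ := hIVT htmem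
  set m : ℝ := (1 - r)^2 + r^2 + 2 * r * (1 - r) * e with hm
  have hm0 : 0 < m := hmpos r
  set ρ : ℝ := Real.sqrt m with hρ
  have hρ0 : 0 < ρ := Real.sqrt_pos.mpr hm0
  set u : n → ℂ := ((ρ⁻¹ : ℝ) : ℂ) • z r with hu
  have hcoef : ((ρ⁻¹ : ℝ) : ℂ) * ((ρ⁻¹ : ℝ) : ℂ) = ((m⁻¹ : ℝ) : ℂ) := by
    norm_cast
    rw [← mul_inv]
    congr 1
    exact Real.mul_self_sqrt hm0.le
  have hu1 : nsq u = 1 := by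
    rw [hu, nsq_smul, Complex.conj_ofReal, hnz r, hcoef]
    norm_cast
    field_simp
    linear_combination -hm
  have hqBu : q B u = (t : ℂ) := by
    rw [hu, q_smul, Complex.conj_ofReal, hqz r, hcoef]
    rw [← hfr, hf]
    norm_cast
    field_simp
    have hX : (1 - r) ^ 2 + r ^ 2 + r * (1 - r) * 2 * e = m := by linear_combination -hm
    rw [hX, mul_assoc, mul_div_cancel_left₀ _ hm0.ne']
  refine ⟨u, hu1, ?_⟩
  have hthis := hqB u
  rw [hqBu, hu1, mul_one] at hthis
  have hqA : q A u = P + (t : ℂ) * (R - P) := by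
    field_simp at hthis
    linear_combination -hthis
  rw [hqA]
  have hs' : (s : ℝ) = 1 - t := by linarith
  rw [hs', Complex.real_smul, Complex.real_smul]
  push_cast
  ring

lemma trace_form {d : ℕ} (B : Matrix n n ℂ) (X : Matrix n (Fin d) ℂ) :
    (Xᴴ * B * X).trace = ∑ j, q B (fun i => X i j) := by
  simp only [trace, diag_apply, mul_apply, conjTranspose_apply, q, dotProduct, mulVec,
    Finset.sum_mul, Finset.mul_sum, Pi.star_apply, RCLike.star_def]
  apply Finset.sum_congr rfl; intro j _
  rw [Finset.sum_comm]
  apply Finset.sum_congr rfl; intro i _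
  apply Finset.sum_congr rfl; intro k _
  ring

lemma trace_gram {d : ℕ} (X : Matrix n (Fin d) ℂ) :
    (Xᴴ * X).trace = ∑ j, nsq (fun i => X i j) := by
  simp only [trace, diag_apply, mul_apply, conjTranspose_apply, nsq, dotProduct,
    Pi.star_apply, RCLike.star_def]

lemma scaled_mem_NR (A : Matrix n n ℂ) (x : n → ℂ) (hx : x ≠ 0) :
    (((((nsq x).re)⁻¹ : ℝ)) : ℂ) * q A x ∈ NR A := by
  set ν : ℝ := (nsq x).re with hν
  have hν0 : 0 < ν := by
    rcases lt_or_eq_of_le (nsq_re_nonneg x) with h | h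
    · exact h
    · exfalso; apply hx
      apply (nsq_eq_zero_iff x).mp
      rw [nsq_eq_re, ← h]; simp
  refine ⟨(((Real.sqrt ν)⁻¹ : ℝ) : ℂ) • x, ?_, ?_⟩
  · rw [nsq_smul, Complex.conj_ofReal]
    rw [nsq_eq_re x, ← hν]
    norm_cast
    rw [← mul_inv, Real.mul_self_sqrt hν0.le]
    field_simp
  · rw [q_smul, Complex.conj_ofReal]
    congr 1
    norm_cast
    rw [← mul_inv, Real.mul_self_sqrt hν0.le]

lemma continuous_q (B : Matrix n n ℂ) : Continuous fun u : n → ℂ => q B u := by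
  have : (fun u : n → ℂ => q B u)
      = fun u : n → ℂ => ∑ i, (starRingEnd ℂ) (u i) * ∑ j, B i j * u j := by
    funext u
    simp [q, dotProduct, mulVec, Pi.star_apply, RCLike.star_def]
  rw [this]
  apply continuous_finset_sum
  intro i _
  exact (Complex.continuous_conj.comp (continuous_apply i)).mul
    (continuous_finset_sum _ fun j _ => continuous_const.mul (continuous_apply j))

lemma continuous_nsq : Continuous fun u : n → ℂ => nsq u := by
  have : (fun u : n → ℂ => nsq u)
      = fun u : n → ℂ => ∑ i, (starRingEnd ℂ) (u i) * u i := by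
    funext u
    simp [nsq, dotProduct, Pi.star_apply, RCLike.star_def]
  rw [this]
  apply continuous_finset_sum
  intro i _
  exact (Complex.continuous_conj.comp (continuous_apply i)).mul (continuous_apply i)

lemma compact_K (Lm : Matrix n n ℂ) (z0 : ℂ) :
    IsCompact {u : n → ℂ | nsq u = 1 ∧ q Lm u = z0} := by
  rw [Metric.isCompact_iff_isClosed_bounded]
  constructor
  · exact (isClosed_eq continuous_nsq continuous_const).inter
      (isClosed_eq (continuous_q Lm) continuous_const)
  · apply Bornology.IsBounded.subset (Metric.isBounded_closedBall (x := (0 : n → ℂ)) (r := 1))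
    rintro u ⟨hu1, -⟩
    rw [Metric.mem_closedBall, dist_zero_right]
    rw [pi_norm_le_iff_of_nonneg zero_le_one]
    intro i
    have h1 : ‖u i‖^2 ≤ 1 := by
      have h2 : ∑ k, ‖u k‖^2 = 1 := by
        rw [← nsq_re_eq, hu1]; simp
      rw [← h2]
      exact Finset.single_le_sum (f := fun k => ‖u k‖^2) (fun j _ => by positivity)
        (Finset.mem_univ i)
    nlinarith [norm_nonneg (u i)]

lemma rank_outer {d : ℕ} [DecidableEq n] (u' : n → ℂ) (hu : u' ≠ 0) (v : Fin d → ℂ)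
    (hv : v ≠ 0) : (Matrix.of fun i j => u' i * v j).rank = 1 := by
  set X : Matrix n (Fin d) ℂ := Matrix.of fun i j => u' i * v j with hX
  have hmv : ∀ wv : Fin d → ℂ, X *ᵥ wv = (v ⬝ᵥ wv) • u' := by
    intro wv
    funext i
    simp only [mulVec, dotProduct, hX, of_apply, Pi.smul_apply, smul_eq_mul, Finset.sum_mul]
    apply Finset.sum_congr rfl
    intro j _
    ring
  have hrange : LinearMap.range X.mulVecLin = Submodule.span ℂ {u'} := by
    apply le_antisymm
    · rintro _ ⟨wv, rfl⟩
      rw [mulVecLin_apply, hmv]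
      exact Submodule.smul_mem _ _ (Submodule.mem_span_singleton_self u')
    · rw [Submodule.span_le]
      rintro _ rfl
      obtain ⟨j0, hj0⟩ := Function.ne_iff.mp hv
      refine ⟨Pi.single j0 (v j0)⁻¹, ?_⟩
      rw [mulVecLin_apply, hmv, dotProduct_single]
      rw [mul_inv_cancel₀ (by simpa using hj0), one_smul]
  rw [Matrix.rank, hrange]
  exact finrank_span_singleton hu

lemma single_unit [DecidableEq n] (a : n) : nsq (Pi.single a (1 : ℂ)) = 1 := by
  rw [nsq_eq_sum]
  rw [Finset.sum_eq_single a]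
  · simp
  · intro b _ hb; simp [Pi.single_apply, hb]
  · intro h; exact absurd (Finset.mem_univ a) h

lemma feas_mem_NR [DecidableEq n] [Nonempty n] {d : ℕ} (A : Matrix n n ℂ)
    (X : Matrix n (Fin d) ℂ) (p : ℝ) (hp : 0 < p) (hX : (Xᴴ * X).trace = (p : ℂ)) :
    (((p⁻¹ : ℝ)) : ℂ) * (Xᴴ * A * X).trace ∈ NR A := by
  classical
  set col : Fin d → (n → ℂ) := fun j i => X i j with hcol
  set w : Fin d → ℝ := fun j => (nsq (col j)).re / p with hwdef
  set zf : Fin d → ℂ := fun j =>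
    if h : col j = 0 then q A (Pi.single (Classical.arbitrary n) 1)
    else ((((nsq (col j)).re)⁻¹ : ℝ) : ℂ) * q A (col j) with hzf
  have hsumν : ∑ j, (nsq (col j)).re = p := by
    have h3 : (∑ j, nsq (col j)) = (p : ℂ) := by rw [← trace_gram]; exact hX
    have h4 := congrArg Complex.re h3
    rw [Complex.re_sum] at h4
    simpa using h4
  have hsum_w : ∑ j, w j = 1 := by
    rw [hwdef, ← Finset.sum_div, hsumν, div_self hp.ne']
  have hw0 : ∀ j ∈ Finset.univ, (0:ℝ) ≤ w j := by
    intro j _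
    exact div_nonneg (nsq_re_nonneg _) hp.le
  have hmem : ∀ j ∈ Finset.univ, zf j ∈ NR A := by
    intro j _
    by_cases h : col j = 0
    · rw [hzf]
      simp only [dif_pos h]
      exact ⟨Pi.single (Classical.arbitrary n) 1, single_unit _, rfl⟩
    · rw [hzf]
      simp only [dif_neg h]
      exact scaled_mem_NR A (col j) h
  have hconv := (NR_convex A).sum_mem hw0 hsum_w hmem
  have heq : ∑ j, w j • zf j = (((p⁻¹ : ℝ)) : ℂ) * (Xᴴ * A * X).trace := by
    rw [trace_form, Finset.mul_sum]
    apply Finset.sum_congr rfl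
    intro j _
    by_cases h : col j = 0
    · have hν : (nsq (col j)).re = 0 := by
        rw [h]
        have : nsq (0 : n → ℂ) = 0 := (nsq_eq_zero_iff 0).mpr rfl
        rw [this]; simp
      have hq0 : q A (col j) = 0 := by
        rw [h]; simp [q, dotProduct]
      rw [hq0, hwdef]
      simp [hν]
    · have hν0 : (nsq (col j)).re ≠ 0 := by
        intro h0
        apply h
        apply (nsq_eq_zero_iff _).mp
        rw [nsq_eq_re, h0]; simp
      rw [hzf, hwdef]
      simp only [dif_neg h]
      rw [Complex.real_smul]
      have hcast : (((nsq (col j)).re : ℝ) : ℂ) ≠ 0 := by exact_mod_cast hν0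
      push_cast
      have hinv : ((((nsq (col j)).re : ℝ)) : ℂ) * ((((nsq (col j)).re : ℝ)) : ℂ)⁻¹ = 1 :=
        mul_inv_cancel₀ hcast
      linear_combination (q A (col j) * ((p : ℂ))⁻¹) * hinv
  rw [heq] at hconv
  exact hconv

end THaux


open THaux

/-- Theorem 3 / rank-one precoder: the problem `min tr(XᴴQX)` subject to
`tr(XᴴX) = p` and `tr(XᴴLX) = η` (nonempty feasible set) always has a global
minimizer of rank one. -/
theorem stmt_13 {M d : ℕ} (hd : 1 ≤ d) (Q L : Matrix (Fin M) (Fin M) ℂ)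
    (hQ : Q.IsHermitian) (hL : L.PosSemidef) (p η : ℝ) (hp : 0 < p) (hη : 0 ≤ η)
    (hne : ∃ X : Matrix (Fin M) (Fin d) ℂ,
      (Xᴴ * X).trace = (p : ℂ) ∧ (Xᴴ * L * X).trace = (η : ℂ)) :
    ∃ Xstar : Matrix (Fin M) (Fin d) ℂ,
      (Xstarᴴ * Xstar).trace = (p : ℂ) ∧ (Xstarᴴ * L * Xstar).trace = (η : ℂ) ∧
      Xstar.rank = 1 ∧
      ∀ X : Matrix (Fin M) (Fin d) ℂ,
        (Xᴴ * X).trace = (p : ℂ) → (Xᴴ * L * X).trace = (η : ℂ) →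
        ((Xstarᴴ * Q * Xstar).trace).re ≤ ((Xᴴ * Q * X).trace).re := by
  classical
  obtain ⟨X0, hX01, hX02⟩ := hne
  have hM : M ≠ 0 := by
    intro h
    subst h
    have hz : (X0ᴴ * X0) = 0 := by
      ext i j
      simp [Matrix.mul_apply]
    rw [hz, Matrix.trace_zero] at hX01
    exact hp.ne' (by exact_mod_cast hX01.symm)
  haveI : Nonempty (Fin M) := ⟨⟨0, Nat.pos_of_ne_zero hM⟩⟩
  set A : Matrix (Fin M) (Fin M) ℂ := L + Complex.I • Q with hA
  have htr : ∀ X : Matrix (Fin M) (Fin d) ℂ,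
      (Xᴴ * A * X).trace = (Xᴴ * L * X).trace + Complex.I * (Xᴴ * Q * X).trace := by
    intro X
    have h : Xᴴ * A * X = Xᴴ * L * X + Complex.I • (Xᴴ * Q * X) := by
      rw [hA, Matrix.mul_add, Matrix.add_mul, Matrix.mul_smul, Matrix.smul_mul]
    rw [h, Matrix.trace_add, Matrix.trace_smul, smul_eq_mul]
  have hrealQ : ∀ X : Matrix (Fin M) (Fin d) ℂ, ∃ c : ℝ, (Xᴴ * Q * X).trace = (c : ℂ) := by
    intro X
    rw [trace_form]
    refine ⟨∑ j, (THaux.q Q (fun i => X i j)).re, ?_⟩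
    rw [Complex.ofReal_sum]
    apply Finset.sum_congr rfl
    intro j _
    exact q_herm_real hQ _
  have hkey : ∀ X : Matrix (Fin M) (Fin d) ℂ, (Xᴴ * X).trace = (p:ℂ) →
      (Xᴴ * L * X).trace = (η:ℂ) →
      ∃ u : Fin M → ℂ, nsq u = 1 ∧ THaux.q L u = ((η / p : ℝ) : ℂ) ∧
        (THaux.q Q u).re = ((Xᴴ * Q * X).trace).re / p := by
    intro X h1 h2
    obtain ⟨u, hu1, hu2⟩ := feas_mem_NR A X p hp h1
    obtain ⟨c, hc⟩ := hrealQ X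
    have hqA : THaux.q A u = THaux.q L u + Complex.I * THaux.q Q u := by
      simp [THaux.q, hA, Matrix.add_mulVec, Matrix.smul_mulVec, dotProduct_add,
        dotProduct_smul, smul_eq_mul]
    have hLre := q_herm_real hL.1 u
    have hQre := q_herm_real hQ u
    set a : ℝ := (THaux.q L u).re with ha
    set b : ℝ := (THaux.q Q u).re with hb
    have heq : (a:ℂ) + Complex.I * (b:ℂ) = ((p⁻¹ : ℝ):ℂ) * ((η:ℂ) + Complex.I * (c:ℂ)) := by
      rw [← hLre, ← hQre, ← hqA, hu2, htr X, h2, hc]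
    have hre := congrArg Complex.re heq
    have him := congrArg Complex.im heq
    simp [Complex.add_re, Complex.add_im, Complex.mul_re, Complex.mul_im] at hre him
    refine ⟨u, hu1, ?_, ?_⟩
    · rw [hLre, hre]
      congr 1
      field_simp
    · rw [← hb, him, hc]
      simp
      ring
  set K : Set (Fin M → ℂ) := {u | nsq u = 1 ∧ THaux.q L u = ((η/p : ℝ):ℂ)} with hK
  have hKne : K.Nonempty := by
    obtain ⟨u, h1, h2, _⟩ := hkey X0 hX01 hX02
    exact ⟨u, h1, h2⟩
  have hKcpt := compact_K L ((η/p : ℝ):ℂ)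
  have hcont : Continuous fun u : Fin M → ℂ => (THaux.q Q u).re :=
    Complex.continuous_re.comp (continuous_q Q)
  obtain ⟨ustar, hustar, hmin⟩ := hKcpt.exists_isMinOn hKne hcont.continuousOn
  set j0 : Fin d := ⟨0, hd⟩ with hj0
  set v : Fin d → ℂ := fun j => if j = j0 then 1 else 0 with hv
  set uscaled : Fin M → ℂ := fun i => ((Real.sqrt p : ℝ) : ℂ) * ustar i with husc
  set Xs : Matrix (Fin M) (Fin d) ℂ := Matrix.of fun i j => uscaled i * v j with hXs
  have hustar_ne : ustar ≠ 0 := by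
    intro h0
    have := hustar.1
    rw [h0, (nsq_eq_zero_iff (0 : Fin M → ℂ)).mpr rfl] at this
    exact one_ne_zero this.symm
  have hcolX : ∀ j, (fun i => Xs i j) = if j = j0 then (((Real.sqrt p : ℝ):ℂ)) • ustar else 0 := by
    intro j
    funext i
    by_cases hj : j = j0 <;> simp [hXs, hv, husc, hj]
  have htrX : ∀ B : Matrix (Fin M) (Fin M) ℂ,
      (Xsᴴ * B * Xs).trace = (p:ℂ) * THaux.q B ustar := by
    intro B
    rw [trace_form]
    rw [Finset.sum_eq_single j0]
    · rw [hcolX j0]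
      have hif : (if j0 = j0 then (((Real.sqrt p : ℝ):ℂ)) • ustar else 0)
          = (((Real.sqrt p : ℝ):ℂ)) • ustar := if_pos rfl
      rw [hif, q_smul, Complex.conj_ofReal, ← Complex.ofReal_mul, Real.mul_self_sqrt hp.le]
    · intro j _ hj
      rw [hcolX j]
      simp [if_neg hj, THaux.q, dotProduct]
    · intro h; exact absurd (Finset.mem_univ j0) h
  have hgrX : (Xsᴴ * Xs).trace = (p:ℂ) * nsq ustar := by
    rw [trace_gram]
    rw [Finset.sum_eq_single j0]
    · rw [hcolX j0]
      have hif : (if j0 = j0 then (((Real.sqrt p : ℝ):ℂ)) • ustar else 0)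
          = (((Real.sqrt p : ℝ):ℂ)) • ustar := if_pos rfl
      rw [hif, nsq_smul, Complex.conj_ofReal, ← Complex.ofReal_mul, Real.mul_self_sqrt hp.le]
    · intro j _ hj
      rw [hcolX j]
      simp [if_neg hj, THaux.nsq, dotProduct]
    · intro h; exact absurd (Finset.mem_univ j0) h
  refine ⟨Xs, ?_, ?_, ?_, ?_⟩
  · rw [hgrX, hustar.1, mul_one]
  · rw [htrX L, hustar.2, ← Complex.ofReal_mul]
    congr 1
    field_simp
  · apply rank_outer
    · intro h0
      apply hustar_ne
      funext i
      have := congrFun h0 i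
      simp only [husc, Pi.zero_apply] at this
      have hsp : ((Real.sqrt p : ℝ) : ℂ) ≠ 0 := by
        simp [Real.sqrt_ne_zero', hp]
      simpa [hsp] using this
    · intro h0
      have := congrFun h0 j0
      simp [hv] at this
  · intro X h1 h2
    obtain ⟨u, hu1, hu2, hu3⟩ := hkey X h1 h2
    have hle : (THaux.q Q ustar).re ≤ (THaux.q Q u).re := hmin ⟨hu1, hu2⟩
    have hlhs : ((Xsᴴ * Q * Xs).trace).re = p * (THaux.q Q ustar).re := by
      rw [htrX Q]
      simp [Complex.mul_re]
    rw [hlhs]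
    rw [hu3] at hle
    have := mul_le_mul_of_nonneg_left hle hp.le
    calc p * (THaux.q Q ustar).re ≤ p * (((Xᴴ * Q * X).trace).re / p) := this
      _ = ((Xᴴ * Q * X).trace).re := by field_simp
end

section
/- (Theorem on rank-one power allocation.) Let Q be an M×M Hermitian matrix over ℂ, L an M×M Hermitian positive semidefinite matrix, p > 0 and η ≥ 0 real numbers, and d ≥ 1. Consider the feasible set F = {(X, Φ) : X ∈ ℂ^{M×d}, Φ ∈ ℂ^{d×d} diagonal with nonnegative real diagonal entries, XᴴX = Φ, tr(Φ) ≤ p, tr(XᴴLX) ≤ η}, which is nonempty (it contains (0,0)). Then the problem min_{(X,Φ) ∈ F} tr(XᴴQX) has a global minimizer (X*, Φ*) in which Φ* has at most one nonzero diagonal entry; i.e., the optimal per-stream power allocation assigns the entire used transmit power to a single data stream, so rank(Φ*) ≤ 1 and hence rank(X*) ≤ 1. -/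
open Matrix
open scoped ComplexOrder

section Aux

variable {M : ℕ}

/-- Given two complex numbers, there is a unimodular phase making both products
have nonpositive real part. -/
lemma phase_choice (a b : ℂ) : ∃ ω : ℂ, ‖ω‖ = 1 ∧ (ω * a).re ≤ 0 ∧ (ω * b).re ≤ 0 := by
  by_cases ha : a = 0
  · by_cases hb : b = 0
    · exact ⟨1, by simp, by simp [ha], by simp [hb]⟩
    · refine ⟨-(starRingEnd ℂ) b / (‖b‖ : ℂ), ?_, by simp [ha], ?_⟩
      · simp [map_div₀, hb]
      · rw [div_mul_eq_mul_div, neg_mul, mul_comm ((starRingEnd ℂ) b) b, Complex.mul_conj]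
        simp [Complex.div_re, Complex.normSq_apply]
        apply div_nonpos_of_nonpos_of_nonneg
        · nlinarith [norm_nonneg b]
        · positivity
  · set u : ℂ := Complex.I * (starRingEnd ℂ) a / (‖a‖ : ℂ) with hu
    have hre : (u * a).re = 0 := by
      rw [hu, div_mul_eq_mul_div, mul_assoc, mul_comm ((starRingEnd ℂ) a) a, Complex.mul_conj]
      simp [Complex.div_re]
    by_cases hb : (u * b).re ≤ 0
    · exact ⟨u, by simp [hu, map_div₀, ha], le_of_eq hre, hb⟩
    · refine ⟨-u, by simp [hu, map_div₀, ha], ?_, ?_⟩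
      · simp [hre]
      · have : ((-u) * b).re = -((u*b).re) := by simp
        rw [this]; linarith [not_le.mp hb]

lemma herm_cross {A : Matrix (Fin M) (Fin M) ℂ} (hA : A.IsHermitian) (u v : Fin M → ℂ) :
    star v ⬝ᵥ A.mulVec u = starRingEnd ℂ (star u ⬝ᵥ A.mulVec v) := by
  simp only [dotProduct, mulVec, dotProduct, Pi.star_apply, map_sum, Finset.mul_sum,
    Complex.star_def]
  rw [Finset.sum_comm]
  refine Finset.sum_congr rfl fun i _ => Finset.sum_congr rfl fun j _ => ?_
  have h : (starRingEnd ℂ) (A i j) = A j i := by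
    simpa [conjTranspose_apply] using congrFun (congrFun hA j) i
  rw [_root_.map_mul, _root_.map_mul, Complex.conj_conj, h]
  ring

lemma quad_expand {A : Matrix (Fin M) (Fin M) ℂ} (hA : A.IsHermitian) (z w : Fin M → ℂ)
    (ω : ℂ) (hω : ‖ω‖ = 1) :
    (star (z + ω • w) ⬝ᵥ A.mulVec (z + ω • w)).re
      = (star z ⬝ᵥ A.mulVec z).re + (star w ⬝ᵥ A.mulVec w).re
        + 2 * (ω * (star z ⬝ᵥ A.mulVec w)).re := by
  have hs : star (z + ω • w) = star z + (starRingEnd ℂ ω) • star w := by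
    ext i; simp [mul_comm]
  rw [hs, mulVec_add, mulVec_smul, add_dotProduct, dotProduct_add, dotProduct_add,
    smul_dotProduct, dotProduct_smul, dotProduct_smul, smul_dotProduct]
  have hcross : star w ⬝ᵥ A.mulVec z = starRingEnd ℂ (star z ⬝ᵥ A.mulVec w) := herm_cross hA z w
  have hωω : ω * (starRingEnd ℂ) ω = 1 := by
    rw [Complex.mul_conj]; norm_cast; simp [Complex.normSq_eq_norm_sq, hω]
  simp only [smul_eq_mul, hcross]
  have h1 : ω * ((starRingEnd ℂ) ω * (star w ⬝ᵥ A.mulVec w)) = star w ⬝ᵥ A.mulVec w := by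
    rw [← mul_assoc, hωω, one_mul]
  rw [h1]
  have h2 : ((starRingEnd ℂ) ω * (starRingEnd ℂ) (star z ⬝ᵥ A.mulVec w)).re
      = (ω * (star z ⬝ᵥ A.mulVec w)).re := by
    rw [← _root_.map_mul]; exact Complex.conj_re _
  simp only [Complex.add_re, h2]
  ring

lemma sum_dot {n : ℕ} (u : Fin n → Fin M → ℂ) (y : Fin M → ℂ) :
    (∑ k, u k) ⬝ᵥ y = ∑ k, u k ⬝ᵥ y := by
  simp [dotProduct, Finset.sum_apply, Finset.sum_mul]
  exact Finset.sum_comm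

lemma dot_sum {n : ℕ} (u : Fin n → Fin M → ℂ) (y : Fin M → ℂ) :
    y ⬝ᵥ (∑ k, u k) = ∑ k, y ⬝ᵥ u k := by
  simp [dotProduct, Finset.sum_apply, Finset.mul_sum]
  exact Finset.sum_comm

/-- For pairwise orthogonal vectors and unimodular coefficients, the Gram "norm" adds up. -/
lemma norm_sum {n : ℕ} (x : Fin n → Fin M → ℂ)
    (horth : ∀ j k, j ≠ k → star (x j) ⬝ᵥ x k = 0)
    (ω : Fin n → ℂ) (hω : ∀ k, ‖ω k‖ = 1) :
    star (∑ k, ω k • x k) ⬝ᵥ (∑ k, ω k • x k) = ∑ k, star (x k) ⬝ᵥ x k := by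
  have hstar : star (∑ k, ω k • x k) = ∑ k, (starRingEnd ℂ (ω k)) • star (x k) := by
    rw [star_sum]
    refine Finset.sum_congr rfl fun k _ => ?_
    ext i; simp [mul_comm]
  rw [hstar, sum_dot]
  refine Finset.sum_congr rfl fun j _ => ?_
  rw [smul_dotProduct, dot_sum]
  have h0 : ∀ k, (star (x j)) ⬝ᵥ (ω k • x k) = ω k * (star (x j) ⬝ᵥ x k) := fun k => by
    rw [dotProduct_smul]; rfl
  simp only [h0]
  rw [Finset.sum_eq_single j]
  · have hωω : (starRingEnd ℂ) (ω j) * ω j = 1 := by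
      rw [mul_comm, Complex.mul_conj]; norm_cast; simp [Complex.normSq_eq_norm_sq, hω j]
    rw [smul_eq_mul, ← mul_assoc, hωω, one_mul]
  · intro k _ hk
    rw [horth j k (Ne.symm hk), mul_zero]
  · simp

/-- Columns can be combined by unimodular phases without increasing either
Hermitian quadratic-form sum. -/
lemma combine {A B : Matrix (Fin M) (Fin M) ℂ} (hA : A.IsHermitian) (hB : B.IsHermitian) :
    ∀ (n : ℕ) (x : Fin n → Fin M → ℂ),
      ∃ ω : Fin n → ℂ, (∀ k, ‖ω k‖ = 1) ∧
        ((star (∑ k, ω k • x k) ⬝ᵥ A.mulVec (∑ k, ω k • x k)).re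
            ≤ ∑ k, (star (x k) ⬝ᵥ A.mulVec (x k)).re) ∧
        ((star (∑ k, ω k • x k) ⬝ᵥ B.mulVec (∑ k, ω k • x k)).re
            ≤ ∑ k, (star (x k) ⬝ᵥ B.mulVec (x k)).re) := by
  intro n
  induction n with
  | zero =>
    intro x
    refine ⟨fun _ => 1, fun k => by simp, ?_, ?_⟩ <;>
      simp [Finset.univ_eq_empty, dotProduct]
  | succ n ih =>
    intro x
    obtain ⟨ω', hω', hA', hB'⟩ := ih (fun k => x k.castSucc)
    set z : Fin M → ℂ := ∑ k : Fin n, ω' k • x k.castSucc with hz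
    set w : Fin M → ℂ := x (Fin.last n) with hw
    obtain ⟨ωl, hωl, hca, hcb⟩ :=
      phase_choice (star z ⬝ᵥ A.mulVec w) (star z ⬝ᵥ B.mulVec w)
    refine ⟨Fin.snoc ω' ωl, ?_, ?_, ?_⟩
    · intro k
      refine Fin.lastCases ?_ ?_ k
      · simp [hωl]
      · intro i; simp [hω' i]
    · have hsum : (∑ k : Fin (n+1), (Fin.snoc ω' ωl : Fin (n+1) → ℂ) k • x k) = z + ωl • w := by
        rw [Fin.sum_univ_castSucc]
        simp [hz, hw]
      rw [hsum, quad_expand hA z w ωl hωl, Fin.sum_univ_castSucc]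
      linarith [hca]
    · have hsum : (∑ k : Fin (n+1), (Fin.snoc ω' ωl : Fin (n+1) → ℂ) k • x k) = z + ωl • w := by
        rw [Fin.sum_univ_castSucc]
        simp [hz, hw]
      rw [hsum, quad_expand hB z w ωl hωl, Fin.sum_univ_castSucc]
      linarith [hcb]

lemma trace_form {d : ℕ} (A : Matrix (Fin M) (Fin M) ℂ) (X : Matrix (Fin M) (Fin d) ℂ) :
    (Xᴴ * A * X).trace = ∑ k, star (fun i => X i k) ⬝ᵥ A.mulVec (fun i => X i k) := by
  simp only [trace, diag_apply, mul_apply, conjTranspose_apply, dotProduct, mulVec,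
    Pi.star_apply, Finset.sum_mul, Finset.mul_sum]
  refine Finset.sum_congr rfl fun k _ => ?_
  rw [Finset.sum_comm]
  refine Finset.sum_congr rfl fun i _ => Finset.sum_congr rfl fun j _ => ?_
  ring

lemma trace_gram {d : ℕ} (X : Matrix (Fin M) (Fin d) ℂ) :
    (Xᴴ * X).trace = ∑ k, star (fun i => X i k) ⬝ᵥ (fun i => X i k) := by
  simp only [trace, diag_apply, mul_apply, conjTranspose_apply, dotProduct, Pi.star_apply]

lemma gram_entry {d : ℕ} (X : Matrix (Fin M) (Fin d) ℂ) (j k : Fin d) :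
    (Xᴴ * X) j k = star (fun i => X i j) ⬝ᵥ (fun i => X i k) := by
  simp [mul_apply, dotProduct, conjTranspose_apply]

lemma form_continuous (A : Matrix (Fin M) (Fin M) ℂ) :
    Continuous fun x : Fin M → ℂ => (star x ⬝ᵥ A.mulVec x).re := by
  apply Complex.continuous_re.comp
  unfold dotProduct mulVec
  apply continuous_finset_sum
  intro i _
  exact ((continuous_apply i).star).mul
    (continuous_finset_sum _ fun j _ => continuous_const.mul (continuous_apply j))

lemma self_dot_eq (x : Fin M → ℂ) :
    star x ⬝ᵥ x = ((∑ i, Complex.normSq (x i) : ℝ) : ℂ) := by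
  have h : ∀ z : ℂ, star z * z = (Complex.normSq z : ℂ) := fun z => by
    rw [Complex.star_def, mul_comm, Complex.mul_conj]
  push_cast
  simp only [dotProduct, Pi.star_apply]
  exact Finset.sum_congr rfl fun i _ => by rw [h]

lemma minimizer_exists (Q L : Matrix (Fin M) (Fin M) ℂ) (p η : ℝ) (hp : 0 < p) (hη : 0 ≤ η) :
    ∃ xstar : Fin M → ℂ, ((star xstar ⬝ᵥ xstar).re ≤ p ∧ (star xstar ⬝ᵥ L.mulVec xstar).re ≤ η) ∧
      ∀ y : Fin M → ℂ, (star y ⬝ᵥ y).re ≤ p → (star y ⬝ᵥ L.mulVec y).re ≤ η →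
        (star xstar ⬝ᵥ Q.mulVec xstar).re ≤ (star y ⬝ᵥ Q.mulVec y).re := by
  set K : Set (Fin M → ℂ) :=
    {x | (star x ⬝ᵥ x).re ≤ p ∧ (star x ⬝ᵥ L.mulVec x).re ≤ η} with hK
  have hcont1 : Continuous fun x : Fin M → ℂ => (star x ⬝ᵥ x).re := by
    have := form_continuous (1 : Matrix (Fin M) (Fin M) ℂ)
    simpa [Matrix.one_mulVec] using this
  have hclosed : IsClosed K := by
    apply IsClosed.inter
    · exact isClosed_le hcont1 continuous_const
    · exact isClosed_le (form_continuous L) continuous_const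
  have hbdd : Bornology.IsBounded K := by
    rw [Metric.isBounded_iff_subset_closedBall 0]
    refine ⟨Real.sqrt p, fun x hx => ?_⟩
    simp only [Metric.mem_closedBall, dist_zero_right]
    rw [pi_norm_le_iff_of_nonneg (Real.sqrt_nonneg p)]
    intro i
    have h1 : (star x ⬝ᵥ x).re = ∑ j, Complex.normSq (x j) := by
      rw [self_dot_eq]; simp
    have h2 : Complex.normSq (x i) ≤ p := by
      have := Finset.single_le_sum (f := fun j => Complex.normSq (x j))
        (fun j _ => Complex.normSq_nonneg _) (Finset.mem_univ i)
      have hxp := hx.1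
      rw [h1] at hxp
      linarith
    have h3 : ‖x i‖ ^ 2 = Complex.normSq (x i) := by
      rw [← Complex.sq_norm]
    nlinarith [Real.sq_sqrt hp.le, Real.sqrt_nonneg p, norm_nonneg (x i)]
  have hcomp : IsCompact K := Metric.isCompact_of_isClosed_isBounded hclosed hbdd
  have hne : K.Nonempty := ⟨0, by simp [hK, hp.le, hη]⟩
  obtain ⟨xstar, hxK, hmin⟩ := hcomp.exists_isMinOn hne ((form_continuous Q).continuousOn)
  exact ⟨xstar, hxK, fun y h1 h2 => hmin (Set.mem_setOf.mpr ⟨h1, h2⟩)⟩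

end Aux

/-- Theorem 4 (rank-one power allocation): the problem `min tr(XᴴQX)` over
pairs `(X, Φ)` with `Φ` diagonal with nonnegative real entries, `XᴴX = Φ`,
`tr(Φ) ≤ p` and `tr(XᴴLX) ≤ η` has a global minimizer `(X*, Φ*)` in which
`Φ*` has at most one nonzero diagonal entry, so `rank(X*) ≤ 1`. -/
theorem stmt_17 {M d : ℕ} (hd : 1 ≤ d) (Q L : Matrix (Fin M) (Fin M) ℂ)
    (hQ : Q.IsHermitian) (hL : L.PosSemidef) (p η : ℝ) (hp : 0 < p) (hη : 0 ≤ η) :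
    ∃ (Xstar : Matrix (Fin M) (Fin d) ℂ) (Φstar : Matrix (Fin d) (Fin d) ℂ),
      (Φstar.IsDiag ∧ (∀ i, (Φstar i i).im = 0 ∧ 0 ≤ (Φstar i i).re) ∧
        Xstarᴴ * Xstar = Φstar ∧ (Φstar.trace).re ≤ p ∧
        ((Xstarᴴ * L * Xstar).trace).re ≤ η) ∧
      (∀ i j, Φstar i i ≠ 0 → Φstar j j ≠ 0 → i = j) ∧ Xstar.rank ≤ 1 ∧
      ∀ (X : Matrix (Fin M) (Fin d) ℂ) (Φ : Matrix (Fin d) (Fin d) ℂ),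
        Φ.IsDiag → (∀ i, (Φ i i).im = 0 ∧ 0 ≤ (Φ i i).re) →
        Xᴴ * X = Φ → (Φ.trace).re ≤ p → ((Xᴴ * L * X).trace).re ≤ η →
        ((Xstarᴴ * Q * Xstar).trace).re ≤ ((Xᴴ * Q * X).trace).re := by
  obtain ⟨xstar, ⟨hxp, hxη⟩, hmin⟩ := minimizer_exists Q L p η hp hη
  set z0 : Fin d := ⟨0, hd⟩ with hz0
  set Xstar : Matrix (Fin M) (Fin d) ℂ := fun i j => if j = z0 then xstar i else 0 with hXstar
  set Φstar : Matrix (Fin d) (Fin d) ℂ := Xstarᴴ * Xstar with hΦstar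
  -- columns of Xstar
  have hcol0 : (fun i => Xstar i z0) = xstar := by funext i; simp [hXstar]
  have hcolne : ∀ k, k ≠ z0 → (fun i => Xstar i k) = 0 := by
    intro k hk; funext i; simp [hXstar, hk]
  -- diagonal values of Φstar
  have hΦdiag : ∀ i, Φstar i i = if i = z0 then star xstar ⬝ᵥ xstar else 0 := by
    intro i
    rw [hΦstar, gram_entry]
    by_cases hi : i = z0
    · simp [hi, hcol0]
    · simp [hi, hcolne i hi]
  have hIsDiag : Φstar.IsDiag := by
    intro i j hij
    rw [hΦstar, gram_entry]
    by_cases hi : i = z0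
    · have hj : j ≠ z0 := fun h => hij (hi.trans h.symm)
      simp [hcolne j hj]
    · simp [hcolne i hi]
  -- trace of Φstar
  have htraceΦ : Φstar.trace = star xstar ⬝ᵥ xstar := by
    rw [trace]
    have : ∀ i : Fin d, Φstar.diag i = if i = z0 then star xstar ⬝ᵥ xstar else 0 := by
      intro i; rw [diag_apply, hΦdiag]
    rw [Finset.sum_congr rfl fun i _ => this i, Finset.sum_ite_eq' Finset.univ z0
      (fun _ => star xstar ⬝ᵥ xstar)]
    simp
  -- L-trace of Xstar
  have htraceL : (Xstarᴴ * L * Xstar).trace = star xstar ⬝ᵥ L.mulVec xstar := by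
    rw [trace_form]
    rw [Finset.sum_eq_single z0]
    · rw [hcol0]
    · intro k _ hk
      rw [hcolne k hk]
      simp
    · simp
  -- Q-trace of Xstar
  have htraceQ : (Xstarᴴ * Q * Xstar).trace = star xstar ⬝ᵥ Q.mulVec xstar := by
    rw [trace_form]
    rw [Finset.sum_eq_single z0]
    · rw [hcol0]
    · intro k _ hk
      rw [hcolne k hk]
      simp
    · simp
  have hselfdot := self_dot_eq xstar
  refine ⟨Xstar, Φstar, ⟨hIsDiag, ?_, rfl, ?_, ?_⟩, ?_, ?_, ?_⟩
  · -- diagonal entries real nonnegative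
    intro i
    rw [hΦdiag]
    by_cases hi : i = z0
    · rw [if_pos hi, hselfdot]
      constructor
      · simp
      · simp only [Complex.ofReal_re]
        exact Finset.sum_nonneg fun j _ => Complex.normSq_nonneg _
    · rw [if_neg hi]; simp
  · rw [htraceΦ]; exact hxp
  · rw [htraceL]; exact hxη
  · -- at most one nonzero diagonal entry
    intro i j hi hj
    have h1 : i = z0 := by
      by_contra h
      rw [hΦdiag, if_neg h] at hi; exact hi rfl
    have h2 : j = z0 := by
      by_contra h
      rw [hΦdiag, if_neg h] at hj; exact hj rfl
    rw [h1, h2]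
  · -- rank ≤ 1
    have hfac : Xstar = (Matrix.of fun i (_ : Fin 1) => xstar i) *
        (Matrix.of fun (_ : Fin 1) j => if j = z0 then (1:ℂ) else 0) := by
      ext i j
      simp [hXstar, mul_apply, mul_ite, mul_one, mul_zero]
    calc Xstar.rank ≤ rank (Matrix.of fun i (_ : Fin 1) => xstar i : Matrix (Fin M) (Fin 1) ℂ) := by
          rw [hfac]; exact rank_mul_le_left _ _
      _ ≤ Fintype.card (Fin 1) := rank_le_card_width _
      _ = 1 := by simp
  · -- minimality
    intro X Φ hΦdiag' hΦent hXX htrΦ htrL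
    set x : Fin d → Fin M → ℂ := fun k i => X i k with hx
    have horth : ∀ j k, j ≠ k → star (x j) ⬝ᵥ x k = 0 := by
      intro j k hjk
      have := gram_entry X j k
      rw [hXX] at this
      rw [← this]
      exact hΦdiag' hjk
    obtain ⟨ω, hω, hLineq, hQineq⟩ := combine hL.1 hQ d x
    set z : Fin M → ℂ := ∑ k, ω k • x k with hzdef
    have hznorm : star z ⬝ᵥ z = Φ.trace := by
      rw [hzdef, norm_sum x horth ω hω, ← hXX, trace_gram]
    have hzL : (star z ⬝ᵥ L.mulVec z).re ≤ η := by
      refine le_trans hLineq ?_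
      rw [← Complex.re_sum, ← trace_form] at *
      exact htrL
    have hzp : (star z ⬝ᵥ z).re ≤ p := by rw [hznorm]; exact htrΦ
    have h1 : (star xstar ⬝ᵥ Q.mulVec xstar).re ≤ (star z ⬝ᵥ Q.mulVec z).re :=
      hmin z hzp hzL
    have h2 : (star z ⬝ᵥ Q.mulVec z).re ≤ ((Xᴴ * Q * X).trace).re := by
      rw [trace_form, Complex.re_sum]
      exact hQineq
    rw [htraceQ]
    exact le_trans h1 h2
end
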